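/- arXiv:2010.06319 — 2 statements merged into one kernel-verified Lean document; each statement's English description precedes it below -/
import Mathlib

section
/- I-matchings: for any rewrite rule L ← K → R (a span of monomorphisms in LHyp_Σ with K edgeless) and any linear hypergraph G, every monomorphism L → G in LHyp_Σ is an I-matching; that is, the composite K → L → G has a pushout complement K → C → G in LHyp_Σ. -/
namespace Paper

/-- A hypergraph signature: a set of edge labels with arities. -/
structure Sig : Type 1 where
  labels : Type
  dom : labels → ℕ
  cod : labels → ℕ

variable {Sg : Sig}

/-- Raw data of a labelled linear hypergraph over `Sg`, with atoms 𝔸 := ℕ.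
`T`/`S` are the (totally ordered, as lists) target/source vertices,
`E` the set of edges, `ell`/`r` assign vertices to an edge (`some e`) or the
interface (`none`), `conn` is the connections function ω, and `lab` labels edges. -/
structure LinHyp (Sg : Sig) where
  T : List ℕ
  S : List ℕ
  E : Finset ℕ
  ell : ℕ → Option ℕ
  r : ℕ → Option ℕ
  conn : ℕ → ℕ
  lab : ℕ → Option Sg.labels

namespace LinHyp

def inputs (F : LinHyp Sg) : List ℕ := F.T.filter fun v => F.ell v = none
def outputs (F : LinHyp Sg) : List ℕ := F.S.filter fun v => F.r v = none
def targetsOf (F : LinHyp Sg) (e : ℕ) : List ℕ := F.T.filter fun v => F.ell v = some e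
def sourcesOf (F : LinHyp Sg) (e : ℕ) : List ℕ := F.S.filter fun v => F.r v = some e

/-- Well-formedness: the conditions making the raw data a genuine labelled
linear hypergraph (T, S disjoint duplicate-free, ω a bijection T → S,
edges labelled with correct arities). -/
structure WF (F : LinHyp Sg) : Prop where
  nodupT : F.T.Nodup
  nodupS : F.S.Nodup
  disjTS : ∀ v ∈ F.T, v ∉ F.S
  ell_mem : ∀ v ∈ F.T, ∀ e, F.ell v = some e → e ∈ F.E
  r_mem : ∀ v ∈ F.S, ∀ e, F.r v = some e → e ∈ F.E
  conn_mem : ∀ v ∈ F.T, F.conn v ∈ F.S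
  conn_inj : ∀ v₁ ∈ F.T, ∀ v₂ ∈ F.T, F.conn v₁ = F.conn v₂ → v₁ = v₂
  conn_surj : ∀ w ∈ F.S, ∃ v ∈ F.T, F.conn v = w
  lab_some : ∀ e ∈ F.E, (F.lab e).isSome
  arity_src : ∀ e ∈ F.E, ∀ l, F.lab e = some l → (F.sourcesOf e).length = Sg.dom l
  arity_tgt : ∀ e ∈ F.E, ∀ l, F.lab e = some l → (F.targetsOf e).length = Sg.cod l

/-- `F` has type `m → n`: it has `m` inputs and `n` outputs. -/
def HasType (F : LinHyp Sg) (m n : ℕ) : Prop :=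
  F.inputs.length = m ∧ F.outputs.length = n

/-- Renaming a hypergraph along a map `f` on atoms with (relative) inverse `g`. -/
def rename (f g : ℕ → ℕ) (F : LinHyp Sg) : LinHyp Sg where
  T := F.T.map f
  S := F.S.map f
  E := F.E.image f
  ell := fun v => (F.ell (g v)).map f
  r := fun v => (F.r (g v)).map f
  conn := fun v => f (F.conn (g v))
  lab := fun e => F.lab (g e)

/-- Rename into even atoms. -/
def renL (F : LinHyp Sg) : LinHyp Sg := rename (fun k => 2 * k) (fun k => k / 2) F
/-- Rename into odd atoms. -/
def renR (F : LinHyp Sg) : LinHyp Sg := rename (fun k => 2 * k + 1) (fun k => k / 2) F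

/-- Composition of two hypergraphs with disjoint atoms. -/
def compAux (F G : LinHyp Sg) : LinHyp Sg where
  T := F.T ++ G.T.filter (fun v => (G.ell v).isSome)
  S := F.S.filter (fun v => (F.r v).isSome) ++ G.S
  E := F.E ∪ G.E
  ell := fun v => if v ∈ F.T then F.ell v else G.ell v
  r := fun v => if v ∈ G.S then G.r v else F.r v
  conn := fun v =>
    if v ∈ F.T then
      if (F.r (F.conn v)).isSome then F.conn v
      else G.conn (G.inputs.getD (F.outputs.idxOf (F.conn v)) 0)
    else G.conn v
  lab := fun e => if e ∈ F.E then F.lab e else G.lab e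

/-- Composition `F ⨾ G` (after renaming apart). -/
def comp (F G : LinHyp Sg) : LinHyp Sg := compAux (renL F) (renR G)

/-- Tensor of two hypergraphs with disjoint atoms. -/
def tensorAux (F G : LinHyp Sg) : LinHyp Sg where
  T := F.T ++ G.T
  S := F.S ++ G.S
  E := F.E ∪ G.E
  ell := fun v => if v ∈ F.T then F.ell v else G.ell v
  r := fun v => if v ∈ F.S then F.r v else G.r v
  conn := fun v => if v ∈ F.T then F.conn v else G.conn v
  lab := fun e => if e ∈ F.E then F.lab e else G.lab e

/-- Monoidal tensor `F ⊗ G` (after renaming apart). -/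
def tensor (F G : LinHyp Sg) : LinHyp Sg := tensorAux (renL F) (renR G)

/-- The identity hypergraph `id_n`. -/
def idH (Sg : Sig) (n : ℕ) : LinHyp Sg where
  T := (List.range n).map fun i => 2 * i
  S := (List.range n).map fun i => 2 * i + 1
  E := ∅
  ell := fun _ => none
  r := fun _ => none
  conn := fun v => v + 1
  lab := fun _ => none

/-- The swap hypergraph `σ_{m,n} : m + n → n + m`. -/
def swapH (Sg : Sig) (m n : ℕ) : LinHyp Sg where
  T := (List.range (m + n)).map fun i => 2 * i
  S := (List.range (n + m)).map fun i => 2 * i + 1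
  E := ∅
  ell := fun _ => none
  r := fun _ => none
  conn := fun v => if v / 2 < m then 2 * (n + v / 2) + 1 else 2 * (v / 2 - m) + 1
  lab := fun _ => none

/-- Trace of a single wire: delete the first input and first output, and
connect the vertex that connected to the first output to ω of the first input. -/
def trace1 (F : LinHyp Sg) : LinHyp Sg :=
  let i0 := F.inputs.getD 0 0
  let o0 := F.outputs.getD 0 0
  { T := F.T.erase i0
    S := F.S.erase o0
    E := F.E
    ell := F.ell
    r := F.r
    conn := fun v => if F.conn v = o0 then F.conn i0 else F.conn v
    lab := F.lab }

/-- The trace `Tr^x(F)`. -/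
def traceH (x : ℕ) (F : LinHyp Sg) : LinHyp Sg := trace1^[x] F

/-- A homomorphism of labelled linear hypergraphs. -/
structure Hom (F G : LinHyp Sg) where
  hT : ℕ → ℕ
  hS : ℕ → ℕ
  hE : ℕ → ℕ
  memT : ∀ v ∈ F.T, hT v ∈ G.T
  memS : ∀ v ∈ F.S, hS v ∈ G.S
  memE : ∀ e ∈ F.E, hE e ∈ G.E
  ell_comm : ∀ v ∈ F.T, G.ell (hT v) = (F.ell v).map hE
  r_comm : ∀ v ∈ F.S, G.r (hS v) = (F.r v).map hE
  conn_comm : ∀ v ∈ F.T, hS (F.conn v) = G.conn (hT v)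
  lab_comm : ∀ e ∈ F.E, G.lab (hE e) = F.lab e
  src_ord : ∀ e ∈ F.E, G.sourcesOf (hE e) = (F.sourcesOf e).map hS
  tgt_ord : ∀ e ∈ F.E, G.targetsOf (hE e) = (F.targetsOf e).map hT

/-- An isomorphism of labelled linear hypergraphs: a homomorphism with
bijective components which preserves inputs and outputs with their order. -/
structure Iso (F G : LinHyp Sg) extends Hom F G where
  injT : ∀ v₁ ∈ F.T, ∀ v₂ ∈ F.T, hT v₁ = hT v₂ → v₁ = v₂
  surjT : ∀ w ∈ G.T, ∃ v ∈ F.T, hT v = w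
  injS : ∀ v₁ ∈ F.S, ∀ v₂ ∈ F.S, hS v₁ = hS v₂ → v₁ = v₂
  surjS : ∀ w ∈ G.S, ∃ v ∈ F.S, hS v = w
  injE : ∀ e₁ ∈ F.E, ∀ e₂ ∈ F.E, hE e₁ = hE e₂ → e₁ = e₂
  surjE : ∀ e' ∈ G.E, ∃ e ∈ F.E, hE e = e'
  inputs_ord : F.inputs.map hT = G.inputs
  outputs_ord : F.outputs.map hS = G.outputs

/-- `F ≅ G` : the two linear hypergraphs are isomorphic. -/
def Isom (F G : LinHyp Sg) : Prop := Nonempty (Iso F G)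

end LinHyp

end Paper

namespace Paper

open CategoryTheory

variable {Sg : Sig}

/-- A homomorphism of labelled linear hypergraphs: maps on target vertices,
source vertices and edges commuting with `ℓ`, `r`, `ω` and preserving labels
and the orders of each edge's sources and targets.  (The maps are normalised
to be the identity outside the carriers, so that they are determined by their
action on the carriers.) -/
@[ext]
structure LHom (F G : LinHyp Sg) where
  hT : ℕ → ℕ
  hS : ℕ → ℕ
  hE : ℕ → ℕ
  normT : ∀ v, v ∉ F.T → hT v = v
  normS : ∀ v, v ∉ F.S → hS v = v
  normE : ∀ e, e ∉ F.E → hE e = e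
  memT : ∀ v ∈ F.T, hT v ∈ G.T
  memS : ∀ v ∈ F.S, hS v ∈ G.S
  memE : ∀ e ∈ F.E, hE e ∈ G.E
  ell_comm : ∀ v ∈ F.T, G.ell (hT v) = (F.ell v).map hE
  r_comm : ∀ v ∈ F.S, G.r (hS v) = (F.r v).map hE
  conn_comm : ∀ v ∈ F.T, hS (F.conn v) = G.conn (hT v)
  lab_comm : ∀ e ∈ F.E, G.lab (hE e) = F.lab e
  src_ord : ∀ e ∈ F.E, G.sourcesOf (hE e) = (F.sourcesOf e).map hS
  tgt_ord : ∀ e ∈ F.E, G.targetsOf (hE e) = (F.targetsOf e).map hT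

/-- Objects of the category `LHyp_Σ`: well-formed labelled linear hypergraphs. -/
def LHypObj (Sg : Sig) := {F : LinHyp Sg // F.WF}

/-- The identity homomorphism of linear hypergraphs. -/
def LHom.idh (F : LinHyp Sg) : LHom F F where
  hT := fun v => v
  hS := fun v => v
  hE := fun e => e
  normT := fun _ _ => rfl
  normS := fun _ _ => rfl
  normE := fun _ _ => rfl
  memT := fun _ h => h
  memS := fun _ h => h
  memE := fun _ h => h
  ell_comm := fun v _ => by simp
  r_comm := fun v _ => by simp
  conn_comm := fun v _ => rfl
  lab_comm := fun e _ => rfl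
  src_ord := fun e _ => by simp
  tgt_ord := fun e _ => by simp

/-- Composition of homomorphisms of (well-formed) linear hypergraphs. -/
def LHom.comph {F G H : LinHyp Sg} (hF : F.WF) (f : LHom F G) (g : LHom G H) :
    LHom F H where
  hT := fun v => if v ∈ F.T then g.hT (f.hT v) else v
  hS := fun v => if v ∈ F.S then g.hS (f.hS v) else v
  hE := fun e => if e ∈ F.E then g.hE (f.hE e) else e
  normT := fun v hv => by simp [hv]
  normS := fun v hv => by simp [hv]
  normE := fun e he => by simp [he]
  memT := fun v hv => by simpa [hv] using g.memT _ (f.memT v hv)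
  memS := fun v hv => by simpa [hv] using g.memS _ (f.memS v hv)
  memE := fun e he => by simpa [he] using g.memE _ (f.memE e he)
  ell_comm := fun v hv => by
    simp only [hv, if_pos]
    rw [g.ell_comm _ (f.memT v hv), f.ell_comm v hv, Option.map_map]
    cases hcase : F.ell v with
    | none => simp
    | some e =>
      have he : e ∈ F.E := hF.ell_mem v hv e hcase
      simp [Function.comp, he]
  r_comm := fun v hv => by
    simp only [hv, if_pos]
    rw [g.r_comm _ (f.memS v hv), f.r_comm v hv, Option.map_map]
    cases hcase : F.r v with
    | none => simp
    | some e =>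
      have he : e ∈ F.E := hF.r_mem v hv e hcase
      simp [Function.comp, he]
  conn_comm := fun v hv => by
    simp only [hv, if_pos, hF.conn_mem v hv, if_pos]
    rw [f.conn_comm v hv, g.conn_comm _ (f.memT v hv)]
  lab_comm := fun e he => by
    simp only [he, if_pos]
    rw [g.lab_comm _ (f.memE e he), f.lab_comm e he]
  src_ord := fun e he => by
    simp only [he, if_pos]
    rw [g.src_ord _ (f.memE e he), f.src_ord e he, List.map_map]
    refine List.map_congr_left fun v hv => ?_
    have : v ∈ F.S := List.mem_of_mem_filter hv
    simp [this]
  tgt_ord := fun e he => by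
    simp only [he, if_pos]
    rw [g.tgt_ord _ (f.memE e he), f.tgt_ord e he, List.map_map]
    refine List.map_congr_left fun v hv => ?_
    have : v ∈ F.T := List.mem_of_mem_filter hv
    simp [this]

/-- The category `LHyp_Σ` of labelled linear hypergraphs over `Σ`. -/
instance LHypCat : Category (LHypObj Sg) where
  Hom F G := LHom F.1 G.1
  id F := LHom.idh F.1
  comp {F _ _} f g := LHom.comph F.2 f g
  id_comp {F G} f := by
    refine LHom.ext ?_ ?_ ?_ <;> funext x
    · by_cases h : x ∈ F.1.T
      · simp [LHom.comph, LHom.idh, h]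
      · simp only [LHom.comph, LHom.idh, if_neg h]
        exact (f.normT x h).symm
    · by_cases h : x ∈ F.1.S
      · simp [LHom.comph, LHom.idh, h]
      · simp only [LHom.comph, LHom.idh, if_neg h]
        exact (f.normS x h).symm
    · by_cases h : x ∈ F.1.E
      · simp [LHom.comph, LHom.idh, h]
      · simp only [LHom.comph, LHom.idh, if_neg h]
        exact (f.normE x h).symm
  comp_id {F G} f := by
    refine LHom.ext ?_ ?_ ?_ <;> funext x
    · by_cases h : x ∈ F.1.T
      · simp [LHom.comph, LHom.idh, h]
      · simp only [LHom.comph, LHom.idh, if_neg h]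
        exact (f.normT x h).symm
    · by_cases h : x ∈ F.1.S
      · simp [LHom.comph, LHom.idh, h]
      · simp only [LHom.comph, LHom.idh, if_neg h]
        exact (f.normS x h).symm
    · by_cases h : x ∈ F.1.E
      · simp [LHom.comph, LHom.idh, h]
      · simp only [LHom.comph, LHom.idh, if_neg h]
        exact (f.normE x h).symm
  assoc {F G H K} f g h := by
    refine LHom.ext ?_ ?_ ?_ <;> funext x
    · by_cases hx : x ∈ F.1.T
      · simp [LHom.comph, hx, f.memT x hx]
      · simp [LHom.comph, hx]
    · by_cases hx : x ∈ F.1.S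
      · simp [LHom.comph, hx, f.memS x hx]
      · simp [LHom.comph, hx]
    · by_cases hx : x ∈ F.1.E
      · simp [LHom.comph, hx, f.memE x hx]
      · simp [LHom.comph, hx]

end Paper

namespace Paper

open CategoryTheory LinHyp

/-! ### List helpers -/

lemma flatMap_congr' {A : List ℕ} {g g' : ℕ → List ℕ} (h : ∀ u ∈ A, g u = g' u) :
    A.flatMap g = A.flatMap g' := by
  induction A with
  | nil => rfl
  | cons x t ih =>
    simp only [List.flatMap_cons]
    rw [h x List.mem_cons_self, ih fun u hu => h u (List.mem_cons_of_mem _ hu)]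

lemma flatMap_if (A : List ℕ) (p : ℕ → Prop) [DecidablePred p] (g : ℕ → List ℕ) :
    (A.flatMap fun u => if p u then g u else []) = (A.filter fun u => p u).flatMap g := by
  induction A with
  | nil => rfl
  | cons x t ih => by_cases h : p x <;> simp [List.flatMap_cons, h, ih]

lemma flatMap_zip (f : ℕ → ℕ) : ∀ (a b : List ℕ), a.map f = b.map f → (b.map f).Nodup →
    (a.flatMap fun u => ((b.filter fun v => f v = f u).map (Nat.pair u))) =
      List.zipWith Nat.pair a b
  | [], [], _, _ => rfl
  | [], y :: b, h, _ => by simp at h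
  | x :: a, [], h, _ => by simp at h
  | x :: a, y :: b, h, hnd => by
    simp only [List.map_cons, List.cons.injEq] at h
    obtain ⟨hxy, htl⟩ := h
    simp only [List.map_cons, List.nodup_cons] at hnd
    have h1 : ((y :: b).filter fun v => decide (f v = f x)) = [y] := by
      rw [List.filter_cons_of_pos (by simp [hxy])]
      have : (b.filter fun v => decide (f v = f x)) = [] := by
        rw [List.filter_eq_nil_iff]
        intro v hv hdv
        have hfv : f v = f y := by simpa [hxy] using hdv
        exact hnd.1 (hfv ▸ (List.mem_map_of_mem hv : f v ∈ b.map f))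
      rw [this]
    have h2 : ∀ u ∈ a, ((y :: b).filter fun v => decide (f v = f u))
        = b.filter fun v => decide (f v = f u) := by
      intro u hu
      apply List.filter_cons_of_neg
      simp only [decide_eq_true_eq]
      intro hyu
      have : f u ∈ List.map f b := htl ▸ (List.mem_map_of_mem hu : f u ∈ a.map f)
      exact hnd.1 (hyu ▸ this)
    rw [List.flatMap_cons, h1, List.zipWith_cons_cons,
      flatMap_congr' (fun u hu => by rw [h2 u hu]), flatMap_zip f a b htl hnd.2]
    rfl

/-! ### Pairs of fibres -/

/-- All pairs of elements of `A` identified by `f`, coded via `Nat.pair`. -/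
def pairsOf (A : List ℕ) (f : ℕ → ℕ) : List ℕ :=
  A.flatMap fun u => (A.filter fun v => f v = f u).map (Nat.pair u)

lemma pair_mem_pairsOf {A : List ℕ} {f : ℕ → ℕ} {u v : ℕ}
    (hu : u ∈ A) (hv : v ∈ A) (hf : f v = f u) : Nat.pair u v ∈ pairsOf A f := by
  simp only [pairsOf, List.mem_flatMap, List.mem_map, List.mem_filter]
  exact ⟨u, hu, v, by simp [hv, hf]⟩

lemma of_mem_pairsOf {A : List ℕ} {f : ℕ → ℕ} {x : ℕ} (h : x ∈ pairsOf A f) :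
    ∃ u ∈ A, ∃ v ∈ A, f v = f u ∧ x = Nat.pair u v := by
  simp only [pairsOf, List.mem_flatMap, List.mem_map, List.mem_filter] at h
  obtain ⟨u, hu, v, ⟨hv, hf⟩, hx⟩ := h
  exact ⟨u, hu, v, hv, by simpa using hf, hx.symm⟩

lemma pair_mem_pairsOf_iff {A : List ℕ} {f : ℕ → ℕ} {u v : ℕ} :
    Nat.pair u v ∈ pairsOf A f ↔ u ∈ A ∧ v ∈ A ∧ f v = f u := by
  constructor
  · intro h
    obtain ⟨u', hu', v', hv', hf, hx⟩ := of_mem_pairsOf h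
    obtain ⟨rfl, rfl⟩ := Nat.pair_eq_pair.mp hx
    exact ⟨hu', hv', hf⟩
  · rintro ⟨hu, hv, hf⟩; exact pair_mem_pairsOf hu hv hf

lemma nodup_pairsOf {A : List ℕ} {f : ℕ → ℕ} (hA : A.Nodup) : (pairsOf A f).Nodup := by
  rw [pairsOf, List.nodup_flatMap]
  constructor
  · intro u _
    exact (hA.filter _).map fun a b hab => (Nat.pair_eq_pair.mp hab).2
  · refine hA.imp ?_
    intro u u' huu' x hx hx'
    obtain ⟨v, -, rfl⟩ := List.mem_map.mp hx
    obtain ⟨v', -, he⟩ := List.mem_map.mp hx'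
    exact huu' (Nat.pair_eq_pair.mp he.symm).1

/-- Pair an option of edges. -/
def optPair : Option ℕ → Option ℕ → Option ℕ
  | some a, some b => some (Nat.pair a b)
  | _, _ => none

lemma optPair_eq_some {o₁ o₂ : Option ℕ} {a b : ℕ} :
    optPair o₁ o₂ = some (Nat.pair a b) ↔ o₁ = some a ∧ o₂ = some b := by
  cases o₁ <;> cases o₂ <;> simp [optPair, Nat.pair_eq_pair]

lemma optPair_eq_none {o₁ o₂ : Option ℕ} (h : o₁ = none ∨ o₂ = none) :
    optPair o₁ o₂ = none := by
  rcases h with h | h <;> cases o₁ <;> cases o₂ <;> simp_all [optPair]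

/-- The key structural lemma: filtering the fibre pairs by a pair of
assignments yields the positional zip of the two filtered lists. -/
lemma pairs_filter_zip (A : List ℕ) (f : ℕ → ℕ) (ρ : ℕ → Option ℕ) (e₁ e₂ : ℕ)
    (hmap : ((A.filter fun v => ρ v = some e₁).map f)
      = (A.filter fun v => ρ v = some e₂).map f)
    (hnd : ((A.filter fun v => ρ v = some e₂).map f).Nodup) :
    ((pairsOf A f).filter fun x =>
        optPair (ρ (Nat.unpair x).1) (ρ (Nat.unpair x).2) = some (Nat.pair e₁ e₂))
      = List.zipWith Nat.pair (A.filter fun v => ρ v = some e₁)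
          (A.filter fun v => ρ v = some e₂) := by
  rw [pairsOf, List.filter_flatMap]
  have step : ∀ u ∈ A,
      (((A.filter fun v => f v = f u).map (Nat.pair u)).filter fun x =>
        optPair (ρ (Nat.unpair x).1) (ρ (Nat.unpair x).2) = some (Nat.pair e₁ e₂))
      = if ρ u = some e₁ then
          (((A.filter fun v => ρ v = some e₂).filter fun v => f v = f u).map (Nat.pair u))
        else [] := by
    intro u _
    rw [List.filter_map]
    by_cases hu : ρ u = some e₁
    · rw [if_pos hu]
      have hcongr : ((A.filter fun v => f v = f u).filter
            ((fun x => decide (optPair (ρ (Nat.unpair x).1) (ρ (Nat.unpair x).2)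
              = some (Nat.pair e₁ e₂))) ∘ Nat.pair u))
          = ((A.filter fun v => f v = f u).filter fun v => ρ v = some e₂) := by
        apply List.filter_congr
        intro v _
        simp [Function.comp, Nat.unpair_pair, optPair_eq_some, hu]
      rw [hcongr, List.filter_comm]
    · rw [if_neg hu]
      have : ((A.filter fun v => f v = f u).filter
            ((fun x => decide (optPair (ρ (Nat.unpair x).1) (ρ (Nat.unpair x).2)
              = some (Nat.pair e₁ e₂))) ∘ Nat.pair u)) = [] := by
        rw [List.filter_eq_nil_iff]
        intro v _
        simp [Function.comp, Nat.unpair_pair, optPair_eq_some, hu]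
      rw [this, List.map_nil]
  rw [flatMap_congr' step, flatMap_if]
  exact flatMap_zip f _ _ hmap hnd

/-! ### The pullback of a hom along itself -/

variable {Sg : Sig}

/-- Kernel-pair hypergraph of a homomorphism `m : L → G`. -/
def pbk (L G : LinHyp Sg) (m : LHom L G) : LinHyp Sg where
  T := pairsOf L.T m.hT
  S := pairsOf L.S m.hS
  E := ((L.E ×ˢ L.E).filter fun q => m.hE q.1 = m.hE q.2).image fun q => Nat.pair q.1 q.2
  ell := fun p => optPair (L.ell (Nat.unpair p).1) (L.ell (Nat.unpair p).2)
  r := fun p => optPair (L.r (Nat.unpair p).1) (L.r (Nat.unpair p).2)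
  conn := fun p => Nat.pair (L.conn (Nat.unpair p).1) (L.conn (Nat.unpair p).2)
  lab := fun e => L.lab (Nat.unpair e).1

lemma pair_mem_pbk_E {L G : LinHyp Sg} {m : LHom L G} {e₁ e₂ : ℕ} :
    Nat.pair e₁ e₂ ∈ (pbk L G m).E ↔ e₁ ∈ L.E ∧ e₂ ∈ L.E ∧ m.hE e₁ = m.hE e₂ := by
  simp only [pbk, Finset.mem_image, Finset.mem_filter, Finset.mem_product]
  constructor
  · rintro ⟨⟨a, b⟩, ⟨⟨ha, hb⟩, hab⟩, he⟩
    obtain ⟨rfl, rfl⟩ := Nat.pair_eq_pair.mp he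
    exact ⟨ha, hb, hab⟩
  · rintro ⟨h1, h2, h3⟩
    exact ⟨(e₁, e₂), ⟨⟨h1, h2⟩, h3⟩, rfl⟩

lemma of_mem_pbk_E {L G : LinHyp Sg} {m : LHom L G} {e : ℕ} (h : e ∈ (pbk L G m).E) :
    ∃ e₁ ∈ L.E, ∃ e₂ ∈ L.E, m.hE e₁ = m.hE e₂ ∧ e = Nat.pair e₁ e₂ := by
  simp only [pbk, Finset.mem_image, Finset.mem_filter, Finset.mem_product] at h
  obtain ⟨⟨a, b⟩, ⟨⟨ha, hb⟩, hab⟩, he⟩ := h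
  exact ⟨a, ha, b, hb, hab, he.symm⟩

lemma ell_fiber {L G : LinHyp Sg} (m : LHom L G) {u v : ℕ}
    (hu : u ∈ L.T) (hv : v ∈ L.T) (h : m.hT u = m.hT v) :
    (L.ell u).map m.hE = (L.ell v).map m.hE := by
  rw [← m.ell_comm u hu, ← m.ell_comm v hv, h]

lemma r_fiber {L G : LinHyp Sg} (m : LHom L G) {u v : ℕ}
    (hu : u ∈ L.S) (hv : v ∈ L.S) (h : m.hS u = m.hS v) :
    (L.r u).map m.hE = (L.r v).map m.hE := by
  rw [← m.r_comm u hu, ← m.r_comm v hv, h]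

lemma pbk_ell_cases {L G : LinHyp Sg} (hL : L.WF) (m : LHom L G) {u v : ℕ}
    (hu : u ∈ L.T) (hv : v ∈ L.T) (hf : m.hT v = m.hT u) :
    (L.ell u = none ∧ L.ell v = none ∧ (pbk L G m).ell (Nat.pair u v) = none) ∨
    ∃ a b, L.ell u = some a ∧ L.ell v = some b ∧ Nat.pair a b ∈ (pbk L G m).E ∧
      (pbk L G m).ell (Nat.pair u v) = some (Nat.pair a b) := by
  have hfib := ell_fiber m hu hv hf.symm
  cases hcu : L.ell u with
  | none =>
    left
    have : L.ell v = none := by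
      cases hcv : L.ell v with
      | none => rfl
      | some b => rw [hcu, hcv] at hfib; simp at hfib
    refine ⟨rfl, this, ?_⟩
    simp [pbk, Nat.unpair_pair, hcu, optPair]
  | some a =>
    right
    cases hcv : L.ell v with
    | none => rw [hcu, hcv] at hfib; simp at hfib
    | some b =>
      rw [hcu, hcv] at hfib
      simp only [Option.map_some] at hfib
      refine ⟨a, b, rfl, rfl, ?_, ?_⟩
      · exact pair_mem_pbk_E.mpr ⟨hL.ell_mem u hu a hcu, hL.ell_mem v hv b hcv, by
          simpa using hfib⟩
      · simp [pbk, Nat.unpair_pair, hcu, hcv, optPair]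

lemma pbk_r_cases {L G : LinHyp Sg} (hL : L.WF) (m : LHom L G) {u v : ℕ}
    (hu : u ∈ L.S) (hv : v ∈ L.S) (hf : m.hS v = m.hS u) :
    (L.r u = none ∧ L.r v = none ∧ (pbk L G m).r (Nat.pair u v) = none) ∨
    ∃ a b, L.r u = some a ∧ L.r v = some b ∧ Nat.pair a b ∈ (pbk L G m).E ∧
      (pbk L G m).r (Nat.pair u v) = some (Nat.pair a b) := by
  have hfib := r_fiber m hu hv hf.symm
  cases hcu : L.r u with
  | none =>
    left
    have : L.r v = none := by
      cases hcv : L.r v with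
      | none => rfl
      | some b => rw [hcu, hcv] at hfib; simp at hfib
    refine ⟨rfl, this, ?_⟩
    simp [pbk, Nat.unpair_pair, hcu, optPair]
  | some a =>
    right
    cases hcv : L.r v with
    | none => rw [hcu, hcv] at hfib; simp at hfib
    | some b =>
      rw [hcu, hcv] at hfib
      simp only [Option.map_some] at hfib
      refine ⟨a, b, rfl, rfl, ?_, ?_⟩
      · exact pair_mem_pbk_E.mpr ⟨hL.r_mem u hu a hcu, hL.r_mem v hv b hcv, by
          simpa using hfib⟩
      · simp [pbk, Nat.unpair_pair, hcu, hcv, optPair]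

lemma pbk_sourcesOf {L G : LinHyp Sg} (hG : G.WF) (m : LHom L G) {e₁ e₂ : ℕ}
    (h1 : e₁ ∈ L.E) (h2 : e₂ ∈ L.E) (he : m.hE e₁ = m.hE e₂) :
    (pbk L G m).sourcesOf (Nat.pair e₁ e₂)
      = List.zipWith Nat.pair (L.sourcesOf e₁) (L.sourcesOf e₂) := by
  have hmap : (L.sourcesOf e₁).map m.hS = (L.sourcesOf e₂).map m.hS := by
    rw [← m.src_ord e₁ h1, ← m.src_ord e₂ h2, he]
  have hnd : ((L.sourcesOf e₂).map m.hS).Nodup := by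
    rw [← m.src_ord e₂ h2]; exact hG.nodupS.filter _
  exact pairs_filter_zip L.S m.hS L.r e₁ e₂ hmap hnd

lemma pbk_targetsOf {L G : LinHyp Sg} (hG : G.WF) (m : LHom L G) {e₁ e₂ : ℕ}
    (h1 : e₁ ∈ L.E) (h2 : e₂ ∈ L.E) (he : m.hE e₁ = m.hE e₂) :
    (pbk L G m).targetsOf (Nat.pair e₁ e₂)
      = List.zipWith Nat.pair (L.targetsOf e₁) (L.targetsOf e₂) := by
  have hmap : (L.targetsOf e₁).map m.hT = (L.targetsOf e₂).map m.hT := by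
    rw [← m.tgt_ord e₁ h1, ← m.tgt_ord e₂ h2, he]
  have hnd : ((L.targetsOf e₂).map m.hT).Nodup := by
    rw [← m.tgt_ord e₂ h2]; exact hG.nodupT.filter _
  exact pairs_filter_zip L.T m.hT L.ell e₁ e₂ hmap hnd

lemma lab_fiber {L G : LinHyp Sg} (m : LHom L G) {e₁ e₂ : ℕ}
    (h1 : e₁ ∈ L.E) (h2 : e₂ ∈ L.E) (he : m.hE e₁ = m.hE e₂) :
    L.lab e₂ = L.lab e₁ := by
  rw [← m.lab_comm e₁ h1, ← m.lab_comm e₂ h2, he]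

lemma pbk_wf {L G : LinHyp Sg} (hL : L.WF) (hG : G.WF) (m : LHom L G) :
    (pbk L G m).WF where
  nodupT := nodup_pairsOf hL.nodupT
  nodupS := nodup_pairsOf hL.nodupS
  disjTS := by
    intro p hp hps
    obtain ⟨u, hu, v, hv, hf, rfl⟩ := of_mem_pairsOf hp
    exact hL.disjTS u hu (pair_mem_pairsOf_iff.mp hps).1
  ell_mem := by
    intro p hp e he
    obtain ⟨u, hu, v, hv, hf, rfl⟩ := of_mem_pairsOf hp
    rcases pbk_ell_cases hL m hu hv hf with ⟨-, -, hnone⟩ | ⟨a, b, -, -, hmem, hsome⟩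
    · rw [hnone] at he; exact absurd he (by simp)
    · rw [hsome] at he; injection he with he'; exact he' ▸ hmem
  r_mem := by
    intro p hp e he
    obtain ⟨u, hu, v, hv, hf, rfl⟩ := of_mem_pairsOf hp
    rcases pbk_r_cases hL m hu hv hf with ⟨-, -, hnone⟩ | ⟨a, b, -, -, hmem, hsome⟩
    · rw [hnone] at he; exact absurd he (by simp)
    · rw [hsome] at he; injection he with he'; exact he' ▸ hmem
  conn_mem := by
    intro p hp
    obtain ⟨u, hu, v, hv, hf, rfl⟩ := of_mem_pairsOf hp
    show Nat.pair (L.conn (Nat.unpair _).1) (L.conn (Nat.unpair _).2) ∈ _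
    rw [Nat.unpair_pair]
    exact pair_mem_pairsOf (hL.conn_mem u hu) (hL.conn_mem v hv)
      (by rw [m.conn_comm v hv, m.conn_comm u hu, hf])
  conn_inj := by
    intro p₁ hp₁ p₂ hp₂ heq
    obtain ⟨u₁, hu₁, v₁, hv₁, hf₁, rfl⟩ := of_mem_pairsOf hp₁
    obtain ⟨u₂, hu₂, v₂, hv₂, hf₂, rfl⟩ := of_mem_pairsOf hp₂
    simp only [pbk, Nat.unpair_pair] at heq
    obtain ⟨h1, h2⟩ := Nat.pair_eq_pair.mp heq
    rw [Nat.pair_eq_pair]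
    exact ⟨hL.conn_inj u₁ hu₁ u₂ hu₂ h1, hL.conn_inj v₁ hv₁ v₂ hv₂ h2⟩
  conn_surj := by
    intro w hw
    obtain ⟨s, hs, s', hs', hf, rfl⟩ := of_mem_pairsOf hw
    obtain ⟨u, hu, hcu⟩ := hL.conn_surj s hs
    obtain ⟨u', hu', hcu'⟩ := hL.conn_surj s' hs'
    have hT : m.hT u' = m.hT u := by
      refine hG.conn_inj _ (m.memT u' hu') _ (m.memT u hu) ?_
      rw [← m.conn_comm u' hu', ← m.conn_comm u hu, hcu, hcu', hf]
    refine ⟨Nat.pair u u', pair_mem_pairsOf hu hu' hT, ?_⟩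
    show Nat.pair (L.conn (Nat.unpair _).1) (L.conn (Nat.unpair _).2) = _
    rw [Nat.unpair_pair]
    simp [hcu, hcu']
  lab_some := by
    intro e he
    obtain ⟨e₁, h1, e₂, h2, hee, rfl⟩ := of_mem_pbk_E he
    show (L.lab (Nat.unpair _).1).isSome
    rw [Nat.unpair_pair]
    exact hL.lab_some e₁ h1
  arity_src := by
    intro e he l hl
    obtain ⟨e₁, h1, e₂, h2, hee, rfl⟩ := of_mem_pbk_E he
    have hl₁ : L.lab e₁ = some l := by
      have : (pbk L G m).lab (Nat.pair e₁ e₂) = L.lab e₁ := by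
        show L.lab (Nat.unpair _).1 = _; rw [Nat.unpair_pair]
      rw [← this]; exact hl
    have hl₂ : L.lab e₂ = some l := (lab_fiber m h1 h2 hee).trans hl₁
    rw [pbk_sourcesOf hG m h1 h2 hee, List.length_zipWith,
      hL.arity_src e₁ h1 l hl₁, hL.arity_src e₂ h2 l hl₂, min_self]
  arity_tgt := by
    intro e he l hl
    obtain ⟨e₁, h1, e₂, h2, hee, rfl⟩ := of_mem_pbk_E he
    have hl₁ : L.lab e₁ = some l := by
      have : (pbk L G m).lab (Nat.pair e₁ e₂) = L.lab e₁ := by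
        show L.lab (Nat.unpair _).1 = _; rw [Nat.unpair_pair]
      rw [← this]; exact hl
    have hl₂ : L.lab e₂ = some l := (lab_fiber m h1 h2 hee).trans hl₁
    rw [pbk_targetsOf hG m h1 h2 hee, List.length_zipWith,
      hL.arity_tgt e₁ h1 l hl₁, hL.arity_tgt e₂ h2 l hl₂, min_self]

lemma map_eq_pos {f : ℕ → ℕ} {l₁ l₂ : List ℕ} (h : l₁.map f = l₂.map f) (i : ℕ)
    (h₁ : i < l₁.length) (h₂ : i < l₂.length) : f l₁[i] = f l₂[i] := by
  have h' : (l₁.map f)[i]'(by simpa using h₁) = (l₂.map f)[i]'(by simpa using h₂) := by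
    simp only [h]
  simpa using h'

/-- First projection from the kernel pair. -/
def pi1 {L G : LinHyp Sg} (hL : L.WF) (hG : G.WF) (m : LHom L G) :
    LHom (pbk L G m) L where
  hT p := if p ∈ (pbk L G m).T then (Nat.unpair p).1 else p
  hS p := if p ∈ (pbk L G m).S then (Nat.unpair p).1 else p
  hE e := if e ∈ (pbk L G m).E then (Nat.unpair e).1 else e
  normT := fun v hv => if_neg hv
  normS := fun v hv => if_neg hv
  normE := fun e he => if_neg he
  memT := by
    intro p hp
    obtain ⟨u, hu, v, hv, hf, rfl⟩ := of_mem_pairsOf hp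
    simpa [hp, Nat.unpair_pair] using hu
  memS := by
    intro p hp
    obtain ⟨u, hu, v, hv, hf, rfl⟩ := of_mem_pairsOf hp
    simpa [hp, Nat.unpair_pair] using hu
  memE := by
    intro e he
    obtain ⟨e₁, h1, e₂, h2, hee, rfl⟩ := of_mem_pbk_E he
    simpa [he, Nat.unpair_pair] using h1
  ell_comm := by
    intro p hp
    obtain ⟨u, hu, v, hv, hf, rfl⟩ := of_mem_pairsOf hp
    beta_reduce
    rw [if_pos hp, Nat.unpair_pair]
    rcases pbk_ell_cases hL m hu hv hf with ⟨h1, -, h3⟩ | ⟨a, b, h1, -, hmem, h3⟩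
    · rw [h1, h3]; rfl
    · rw [h1, h3]
      simp [hmem, Nat.unpair_pair]
  r_comm := by
    intro p hp
    obtain ⟨u, hu, v, hv, hf, rfl⟩ := of_mem_pairsOf hp
    beta_reduce
    rw [if_pos hp, Nat.unpair_pair]
    rcases pbk_r_cases hL m hu hv hf with ⟨h1, -, h3⟩ | ⟨a, b, h1, -, hmem, h3⟩
    · rw [h1, h3]; rfl
    · rw [h1, h3]
      simp [hmem, Nat.unpair_pair]
  conn_comm := by
    intro p hp
    obtain ⟨u, hu, v, hv, hf, rfl⟩ := of_mem_pairsOf hp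
    have hc : (pbk L G m).conn (Nat.pair u v) = Nat.pair (L.conn u) (L.conn v) := by
      show Nat.pair (L.conn (Nat.unpair _).1) (L.conn (Nat.unpair _).2) = _
      rw [Nat.unpair_pair]
    have hmem : Nat.pair (L.conn u) (L.conn v) ∈ (pbk L G m).S :=
      pair_mem_pairsOf (hL.conn_mem u hu) (hL.conn_mem v hv)
        (by rw [m.conn_comm v hv, m.conn_comm u hu, hf])
    beta_reduce
    rw [hc, if_pos hp, if_pos hmem, Nat.unpair_pair, Nat.unpair_pair]
  lab_comm := by
    intro e he
    obtain ⟨e₁, h1, e₂, h2, hee, rfl⟩ := of_mem_pbk_E he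
    beta_reduce
    rw [if_pos he, Nat.unpair_pair]
    show _ = L.lab (Nat.unpair _).1
    rw [Nat.unpair_pair]
  src_ord := by
    intro e he
    obtain ⟨e₁, h1, e₂, h2, hee, rfl⟩ := of_mem_pbk_E he
    beta_reduce
    rw [if_pos he, Nat.unpair_pair, pbk_sourcesOf hG m h1 h2 hee]
    have hmap : (L.sourcesOf e₁).map m.hS = (L.sourcesOf e₂).map m.hS := by
      rw [← m.src_ord e₁ h1, ← m.src_ord e₂ h2, hee]
    have hlen : (L.sourcesOf e₁).length = (L.sourcesOf e₂).length := by
      simpa using congrArg List.length hmap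
    refine (List.ext_getElem ?_ ?_).symm
    · simp [List.length_zipWith, hlen]
    · intro i hi1 hi2
      have hi3 : i < (L.sourcesOf e₁).length := by simpa using hi2
      have hi4 : i < (L.sourcesOf e₂).length := hlen ▸ hi3
      simp only [List.getElem_map, List.getElem_zipWith]
      have hmem : Nat.pair (L.sourcesOf e₁)[i] (L.sourcesOf e₂)[i] ∈ (pbk L G m).S :=
        pair_mem_pairsOf (List.mem_of_mem_filter (List.getElem_mem hi3))
          (List.mem_of_mem_filter (List.getElem_mem hi4)) (map_eq_pos hmap.symm i hi4 hi3)
      rw [if_pos hmem, Nat.unpair_pair]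
  tgt_ord := by
    intro e he
    obtain ⟨e₁, h1, e₂, h2, hee, rfl⟩ := of_mem_pbk_E he
    beta_reduce
    rw [if_pos he, Nat.unpair_pair, pbk_targetsOf hG m h1 h2 hee]
    have hmap : (L.targetsOf e₁).map m.hT = (L.targetsOf e₂).map m.hT := by
      rw [← m.tgt_ord e₁ h1, ← m.tgt_ord e₂ h2, hee]
    have hlen : (L.targetsOf e₁).length = (L.targetsOf e₂).length := by
      simpa using congrArg List.length hmap
    refine (List.ext_getElem ?_ ?_).symm
    · simp [List.length_zipWith, hlen]
    · intro i hi1 hi2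
      have hi3 : i < (L.targetsOf e₁).length := by simpa using hi2
      have hi4 : i < (L.targetsOf e₂).length := hlen ▸ hi3
      simp only [List.getElem_map, List.getElem_zipWith]
      have hmem : Nat.pair (L.targetsOf e₁)[i] (L.targetsOf e₂)[i] ∈ (pbk L G m).T :=
        pair_mem_pairsOf (List.mem_of_mem_filter (List.getElem_mem hi3))
          (List.mem_of_mem_filter (List.getElem_mem hi4)) (map_eq_pos hmap.symm i hi4 hi3)
      rw [if_pos hmem, Nat.unpair_pair]

/-- Second projection from the kernel pair. -/
def pi2 {L G : LinHyp Sg} (hL : L.WF) (hG : G.WF) (m : LHom L G) :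
    LHom (pbk L G m) L where
  hT p := if p ∈ (pbk L G m).T then (Nat.unpair p).2 else p
  hS p := if p ∈ (pbk L G m).S then (Nat.unpair p).2 else p
  hE e := if e ∈ (pbk L G m).E then (Nat.unpair e).2 else e
  normT := fun v hv => if_neg hv
  normS := fun v hv => if_neg hv
  normE := fun e he => if_neg he
  memT := by
    intro p hp
    obtain ⟨u, hu, v, hv, hf, rfl⟩ := of_mem_pairsOf hp
    simpa [hp, Nat.unpair_pair] using hv
  memS := by
    intro p hp
    obtain ⟨u, hu, v, hv, hf, rfl⟩ := of_mem_pairsOf hp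
    simpa [hp, Nat.unpair_pair] using hv
  memE := by
    intro e he
    obtain ⟨e₁, h1, e₂, h2, hee, rfl⟩ := of_mem_pbk_E he
    simpa [he, Nat.unpair_pair] using h2
  ell_comm := by
    intro p hp
    obtain ⟨u, hu, v, hv, hf, rfl⟩ := of_mem_pairsOf hp
    beta_reduce
    rw [if_pos hp, Nat.unpair_pair]
    rcases pbk_ell_cases hL m hu hv hf with ⟨-, h2, h3⟩ | ⟨a, b, -, h2, hmem, h3⟩
    · rw [h2, h3]; rfl
    · rw [h2, h3]
      simp [hmem, Nat.unpair_pair]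
  r_comm := by
    intro p hp
    obtain ⟨u, hu, v, hv, hf, rfl⟩ := of_mem_pairsOf hp
    beta_reduce
    rw [if_pos hp, Nat.unpair_pair]
    rcases pbk_r_cases hL m hu hv hf with ⟨-, h2, h3⟩ | ⟨a, b, -, h2, hmem, h3⟩
    · rw [h2, h3]; rfl
    · rw [h2, h3]
      simp [hmem, Nat.unpair_pair]
  conn_comm := by
    intro p hp
    obtain ⟨u, hu, v, hv, hf, rfl⟩ := of_mem_pairsOf hp
    have hc : (pbk L G m).conn (Nat.pair u v) = Nat.pair (L.conn u) (L.conn v) := by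
      show Nat.pair (L.conn (Nat.unpair _).1) (L.conn (Nat.unpair _).2) = _
      rw [Nat.unpair_pair]
    have hmem : Nat.pair (L.conn u) (L.conn v) ∈ (pbk L G m).S :=
      pair_mem_pairsOf (hL.conn_mem u hu) (hL.conn_mem v hv)
        (by rw [m.conn_comm v hv, m.conn_comm u hu, hf])
    beta_reduce
    rw [hc, if_pos hp, if_pos hmem, Nat.unpair_pair, Nat.unpair_pair]
  lab_comm := by
    intro e he
    obtain ⟨e₁, h1, e₂, h2, hee, rfl⟩ := of_mem_pbk_E he
    beta_reduce
    rw [if_pos he, Nat.unpair_pair]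
    show _ = L.lab (Nat.unpair _).1
    rw [Nat.unpair_pair]
    exact lab_fiber m h1 h2 hee
  src_ord := by
    intro e he
    obtain ⟨e₁, h1, e₂, h2, hee, rfl⟩ := of_mem_pbk_E he
    beta_reduce
    rw [if_pos he, Nat.unpair_pair, pbk_sourcesOf hG m h1 h2 hee]
    have hmap : (L.sourcesOf e₁).map m.hS = (L.sourcesOf e₂).map m.hS := by
      rw [← m.src_ord e₁ h1, ← m.src_ord e₂ h2, hee]
    have hlen : (L.sourcesOf e₁).length = (L.sourcesOf e₂).length := by
      simpa using congrArg List.length hmap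
    refine (List.ext_getElem ?_ ?_).symm
    · simp [List.length_zipWith, hlen]
    · intro i hi1 hi2
      have hi3 : i < (L.sourcesOf e₁).length := by simp at hi2; omega
      have hi4 : i < (L.sourcesOf e₂).length := hlen ▸ hi3
      simp only [List.getElem_map, List.getElem_zipWith]
      have hmem : Nat.pair (L.sourcesOf e₁)[i] (L.sourcesOf e₂)[i] ∈ (pbk L G m).S :=
        pair_mem_pairsOf (List.mem_of_mem_filter (List.getElem_mem hi3))
          (List.mem_of_mem_filter (List.getElem_mem hi4)) (map_eq_pos hmap.symm i hi4 hi3)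
      rw [if_pos hmem, Nat.unpair_pair]
  tgt_ord := by
    intro e he
    obtain ⟨e₁, h1, e₂, h2, hee, rfl⟩ := of_mem_pbk_E he
    beta_reduce
    rw [if_pos he, Nat.unpair_pair, pbk_targetsOf hG m h1 h2 hee]
    have hmap : (L.targetsOf e₁).map m.hT = (L.targetsOf e₂).map m.hT := by
      rw [← m.tgt_ord e₁ h1, ← m.tgt_ord e₂ h2, hee]
    have hlen : (L.targetsOf e₁).length = (L.targetsOf e₂).length := by
      simpa using congrArg List.length hmap
    refine (List.ext_getElem ?_ ?_).symm
    · simp [List.length_zipWith, hlen]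
    · intro i hi1 hi2
      have hi3 : i < (L.targetsOf e₁).length := by simp at hi2; omega
      have hi4 : i < (L.targetsOf e₂).length := hlen ▸ hi3
      simp only [List.getElem_map, List.getElem_zipWith]
      have hmem : Nat.pair (L.targetsOf e₁)[i] (L.targetsOf e₂)[i] ∈ (pbk L G m).T :=
        pair_mem_pairsOf (List.mem_of_mem_filter (List.getElem_mem hi3))
          (List.mem_of_mem_filter (List.getElem_mem hi4)) (map_eq_pos hmap.symm i hi4 hi3)
      rw [if_pos hmem, Nat.unpair_pair]

/-- A mono in `LHyp_Σ` is componentwise injective on the carriers. -/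
lemma mono_inj {F H : LHypObj Sg} (m : F ⟶ H) (hm : Mono m) :
    (∀ u ∈ F.1.T, ∀ v ∈ F.1.T, m.hT u = m.hT v → u = v) ∧
    (∀ u ∈ F.1.S, ∀ v ∈ F.1.S, m.hS u = m.hS v → u = v) ∧
    (∀ u ∈ F.1.E, ∀ v ∈ F.1.E, m.hE u = m.hE v → u = v) := by
  haveI := hm
  let P : LHypObj Sg := ⟨pbk F.1 H.1 m, pbk_wf F.2 H.2 m⟩
  let p1 : P ⟶ F := pi1 F.2 H.2 m
  let p2 : P ⟶ F := pi2 F.2 H.2 m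
  have hcomp : p1 ≫ m = p2 ≫ m := by
    refine LHom.ext ?_ ?_ ?_ <;> funext x
    · show (if x ∈ P.1.T then m.hT (p1.hT x) else x) = (if x ∈ P.1.T then m.hT (p2.hT x) else x)
      by_cases hx : x ∈ P.1.T
      · rw [if_pos hx, if_pos hx]
        obtain ⟨u, hu, v, hv, hf, rfl⟩ := of_mem_pairsOf hx
        show m.hT (if _ ∈ (pbk F.1 H.1 m).T then _ else _) =
          m.hT (if _ ∈ (pbk F.1 H.1 m).T then _ else _)
        rw [if_pos hx, if_pos hx, Nat.unpair_pair]
        exact hf.symm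
      · rw [if_neg hx, if_neg hx]
    · show (if x ∈ P.1.S then m.hS (p1.hS x) else x) = (if x ∈ P.1.S then m.hS (p2.hS x) else x)
      by_cases hx : x ∈ P.1.S
      · rw [if_pos hx, if_pos hx]
        obtain ⟨u, hu, v, hv, hf, rfl⟩ := of_mem_pairsOf hx
        show m.hS (if _ ∈ (pbk F.1 H.1 m).S then _ else _) =
          m.hS (if _ ∈ (pbk F.1 H.1 m).S then _ else _)
        rw [if_pos hx, if_pos hx, Nat.unpair_pair]
        exact hf.symm
      · rw [if_neg hx, if_neg hx]
    · show (if x ∈ P.1.E then m.hE (p1.hE x) else x) = (if x ∈ P.1.E then m.hE (p2.hE x) else x)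
      by_cases hx : x ∈ P.1.E
      · rw [if_pos hx, if_pos hx]
        obtain ⟨e₁, h1, e₂, h2, hee, rfl⟩ := of_mem_pbk_E hx
        show m.hE (if _ ∈ (pbk F.1 H.1 m).E then _ else _) =
          m.hE (if _ ∈ (pbk F.1 H.1 m).E then _ else _)
        rw [if_pos hx, if_pos hx, Nat.unpair_pair]
        exact hee
      · rw [if_neg hx, if_neg hx]
  have hpp : p1 = p2 := (cancel_mono m).mp hcomp
  refine ⟨?_, ?_, ?_⟩
  · intro u hu v hv h
    have hp : Nat.pair u v ∈ P.1.T := pair_mem_pairsOf hu hv h.symm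
    have := congrFun (congrArg LHom.hT hpp) (Nat.pair u v)
    show u = v
    have hp' : Nat.pair u v ∈ (pbk F.1 H.1 m).T := hp
    have h1 : p1.hT (Nat.pair u v) = u := by
      show (if _ ∈ (pbk F.1 H.1 m).T then _ else _) = u
      rw [if_pos hp', Nat.unpair_pair]
    have h2 : p2.hT (Nat.pair u v) = v := by
      show (if _ ∈ (pbk F.1 H.1 m).T then _ else _) = v
      rw [if_pos hp', Nat.unpair_pair]
    exact h1.symm.trans (this.trans h2)
  · intro u hu v hv h
    have hp : Nat.pair u v ∈ P.1.S := pair_mem_pairsOf hu hv h.symm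
    have := congrFun (congrArg LHom.hS hpp) (Nat.pair u v)
    have hp' : Nat.pair u v ∈ (pbk F.1 H.1 m).S := hp
    have h1 : p1.hS (Nat.pair u v) = u := by
      show (if _ ∈ (pbk F.1 H.1 m).S then _ else _) = u
      rw [if_pos hp', Nat.unpair_pair]
    have h2 : p2.hS (Nat.pair u v) = v := by
      show (if _ ∈ (pbk F.1 H.1 m).S then _ else _) = v
      rw [if_pos hp', Nat.unpair_pair]
    exact h1.symm.trans (this.trans h2)
  · intro u hu v hv h
    have hp : Nat.pair u v ∈ P.1.E := pair_mem_pbk_E.mpr ⟨hu, hv, h⟩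
    have := congrFun (congrArg LHom.hE hpp) (Nat.pair u v)
    have hp' : Nat.pair u v ∈ (pbk F.1 H.1 m).E := hp
    have h1 : p1.hE (Nat.pair u v) = u := by
      show (if _ ∈ (pbk F.1 H.1 m).E then _ else _) = u
      rw [if_pos hp', Nat.unpair_pair]
    have h2 : p2.hE (Nat.pair u v) = v := by
      show (if _ ∈ (pbk F.1 H.1 m).E then _ else _) = v
      rw [if_pos hp', Nat.unpair_pair]
    exact h1.symm.trans (this.trans h2)

/-! ### The pushout complement -/

/-- The complement of the image of `L` (minus the image of `K`) in `G`. -/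
def cmpl (K L G : LinHyp Sg) (k : LHom K L) (m : LHom L G) : LinHyp Sg where
  T := G.T.filter fun v => v ∈ K.T.map (fun t => m.hT (k.hT t)) ∨ v ∉ L.T.map m.hT
  S := G.S.filter fun v => v ∈ K.S.map (fun t => m.hS (k.hS t)) ∨ v ∉ L.S.map m.hS
  E := G.E.filter fun e => e ∉ L.E.image m.hE
  ell := G.ell
  r := G.r
  conn := G.conn
  lab := G.lab

variable {K L G : LinHyp Sg} {k : LHom K L} {m : LHom L G}

lemma mem_cmpl_T {v : ℕ} :
    v ∈ (cmpl K L G k m).T ↔ v ∈ G.T ∧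
      (v ∈ K.T.map (fun t => m.hT (k.hT t)) ∨ v ∉ L.T.map m.hT) := by
  simp [cmpl, List.mem_filter]

lemma mem_cmpl_S {v : ℕ} :
    v ∈ (cmpl K L G k m).S ↔ v ∈ G.S ∧
      (v ∈ K.S.map (fun t => m.hS (k.hS t)) ∨ v ∉ L.S.map m.hS) := by
  simp [cmpl, List.mem_filter]

lemma mem_cmpl_E {e : ℕ} :
    e ∈ (cmpl K L G k m).E ↔ e ∈ G.E ∧ e ∉ L.E.image m.hE := by
  simp [cmpl, Finset.mem_filter]

lemma K_ell_none (hK : K.WF) (hedge : K.E = ∅) {t : ℕ} (ht : t ∈ K.T) :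
    K.ell t = none := by
  cases h : K.ell t with
  | none => rfl
  | some e => exact absurd (hK.ell_mem t ht e h) (by simp [hedge])

lemma K_r_none (hK : K.WF) (hedge : K.E = ∅) {t : ℕ} (ht : t ∈ K.S) :
    K.r t = none := by
  cases h : K.r t with
  | none => rfl
  | some e => exact absurd (hK.r_mem t ht e h) (by simp [hedge])

/-- A target vertex of an edge in the image of `m` is in the image of `m`. -/
lemma target_in_map {v e' : ℕ} (he' : e' ∈ L.E) (hv : v ∈ G.T)
    (he : G.ell v = some (m.hE e')) : v ∈ L.T.map m.hT := by
  have htg := m.tgt_ord e' he'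
  have hmem : v ∈ G.targetsOf (m.hE e') := List.mem_filter.mpr ⟨hv, by simp [he]⟩
  rw [htg] at hmem
  obtain ⟨u, hu, rfl⟩ := List.mem_map.mp hmem
  exact List.mem_map_of_mem (List.mem_of_mem_filter hu)

lemma source_in_map {v e' : ℕ} (he' : e' ∈ L.E) (hv : v ∈ G.S)
    (he : G.r v = some (m.hE e')) : v ∈ L.S.map m.hS := by
  have hsg := m.src_ord e' he'
  have hmem : v ∈ G.sourcesOf (m.hE e') := List.mem_filter.mpr ⟨hv, by simp [he]⟩
  rw [hsg] at hmem
  obtain ⟨u, hu, rfl⟩ := List.mem_map.mp hmem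
  exact List.mem_map_of_mem (List.mem_of_mem_filter hu)

/-- A target vertex of an edge not in the image of `m` avoids the image of `m`. -/
lemma target_not_map (hL : L.WF) {v e : ℕ} (hv : v ∈ G.T)
    (he : G.ell v = some e) (hni : e ∉ L.E.image m.hE) : v ∉ L.T.map m.hT := by
  intro hmem
  obtain ⟨u, hu, rfl⟩ := List.mem_map.mp hmem
  have hcm := m.ell_comm u hu
  rw [he] at hcm
  cases hcase : L.ell u with
  | none => rw [hcase] at hcm; simp at hcm
  | some e' =>
    rw [hcase] at hcm
    simp only [Option.map_some] at hcm
    injection hcm with hcm'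
    exact hni (Finset.mem_image.mpr ⟨e', hL.ell_mem u hu e' hcase, hcm'.symm⟩)

lemma source_not_map (hL : L.WF) {v e : ℕ} (hv : v ∈ G.S)
    (he : G.r v = some e) (hni : e ∉ L.E.image m.hE) : v ∉ L.S.map m.hS := by
  intro hmem
  obtain ⟨u, hu, rfl⟩ := List.mem_map.mp hmem
  have hcm := m.r_comm u hu
  rw [he] at hcm
  cases hcase : L.r u with
  | none => rw [hcase] at hcm; simp at hcm
  | some e' =>
    rw [hcase] at hcm
    simp only [Option.map_some] at hcm
    injection hcm with hcm'
    exact hni (Finset.mem_image.mpr ⟨e', hL.r_mem u hu e' hcase, hcm'.symm⟩)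

lemma cmpl_sourcesOf (hL : L.WF) {e : ℕ} (he : e ∈ (cmpl K L G k m).E) :
    (cmpl K L G k m).sourcesOf e = G.sourcesOf e := by
  obtain ⟨heG, hni⟩ := mem_cmpl_E.mp he
  show (G.S.filter _).filter _ = G.S.filter _
  rw [List.filter_filter]
  apply List.filter_congr
  intro v hv
  by_cases hr : G.r v = some e
  · have : v ∉ L.S.map m.hS := source_not_map hL hv hr hni
    simp [cmpl, hr, this]
  · simp [cmpl, hr]

lemma cmpl_targetsOf (hL : L.WF) {e : ℕ} (he : e ∈ (cmpl K L G k m).E) :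
    (cmpl K L G k m).targetsOf e = G.targetsOf e := by
  obtain ⟨heG, hni⟩ := mem_cmpl_E.mp he
  show (G.T.filter _).filter _ = G.T.filter _
  rw [List.filter_filter]
  apply List.filter_congr
  intro v hv
  by_cases hr : G.ell v = some e
  · have : v ∉ L.T.map m.hT := target_not_map hL hv hr hni
    simp [cmpl, hr, this]
  · simp [cmpl, hr]

lemma cmpl_wf (hK : K.WF) (hL : L.WF) (hG : G.WF) (k : LHom K L) (m : LHom L G)
    (hedge : K.E = ∅) : (cmpl K L G k m).WF where
  nodupT := hG.nodupT.filter _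
  nodupS := hG.nodupS.filter _
  disjTS := fun v hv hs =>
    hG.disjTS v (List.mem_of_mem_filter hv) (List.mem_of_mem_filter hs)
  ell_mem := by
    intro v hv e he
    obtain ⟨hvG, hcond⟩ := mem_cmpl_T.mp hv
    rw [mem_cmpl_E]
    refine ⟨hG.ell_mem v hvG e he, ?_⟩
    intro himg
    obtain ⟨e', he', rfl⟩ := Finset.mem_image.mp himg
    rcases hcond with hkk | hni
    · obtain ⟨t, ht, rfl⟩ := List.mem_map.mp hkk
      have : (cmpl K L G k m).ell (m.hT (k.hT t)) = none := by
        show G.ell _ = none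
        rw [m.ell_comm _ (k.memT t ht), k.ell_comm t ht, K_ell_none hK hedge ht]
        rfl
      rw [this] at he
      exact absurd he (by simp)
    · exact hni (target_in_map he' hvG he)
  r_mem := by
    intro v hv e he
    obtain ⟨hvG, hcond⟩ := mem_cmpl_S.mp hv
    rw [mem_cmpl_E]
    refine ⟨hG.r_mem v hvG e he, ?_⟩
    intro himg
    obtain ⟨e', he', rfl⟩ := Finset.mem_image.mp himg
    rcases hcond with hkk | hni
    · obtain ⟨t, ht, rfl⟩ := List.mem_map.mp hkk
      have : (cmpl K L G k m).r (m.hS (k.hS t)) = none := by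
        show G.r _ = none
        rw [m.r_comm _ (k.memS t ht), k.r_comm t ht, K_r_none hK hedge ht]
        rfl
      rw [this] at he
      exact absurd he (by simp)
    · exact hni (source_in_map he' hvG he)
  conn_mem := by
    intro v hv
    obtain ⟨hvG, hcond⟩ := mem_cmpl_T.mp hv
    show G.conn v ∈ (cmpl K L G k m).S
    rw [mem_cmpl_S]
    refine ⟨hG.conn_mem v hvG, ?_⟩
    rcases hcond with hkk | hni
    · obtain ⟨t, ht, rfl⟩ := List.mem_map.mp hkk
      left
      refine List.mem_map.mpr ⟨K.conn t, hK.conn_mem t ht, ?_⟩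
      rw [← m.conn_comm _ (k.memT t ht), ← k.conn_comm t ht]
    · right
      intro hmem
      obtain ⟨w, hw, hweq⟩ := List.mem_map.mp hmem
      obtain ⟨u, hu, hcu⟩ := hL.conn_surj w hw
      have : m.hT u = v := by
        refine hG.conn_inj _ (m.memT u hu) _ hvG ?_
        rw [← m.conn_comm u hu, hcu, hweq]
      exact hni (List.mem_map.mpr ⟨u, hu, this⟩)
  conn_inj := fun v₁ hv₁ v₂ hv₂ h =>
    hG.conn_inj v₁ (List.mem_of_mem_filter hv₁) v₂ (List.mem_of_mem_filter hv₂) h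
  conn_surj := by
    intro w hw
    obtain ⟨hwG, hcond⟩ := mem_cmpl_S.mp hw
    obtain ⟨v, hv, hcv⟩ := hG.conn_surj w hwG
    refine ⟨v, ?_, hcv⟩
    rw [mem_cmpl_T]
    refine ⟨hv, ?_⟩
    rcases hcond with hkk | hni
    · obtain ⟨s, hs, rfl⟩ := List.mem_map.mp hkk
      obtain ⟨t, ht, hct⟩ := hK.conn_surj s hs
      left
      refine List.mem_map.mpr ⟨t, ht, ?_⟩
      refine hG.conn_inj _ (m.memT _ (k.memT t ht)) _ hv ?_
      rw [← m.conn_comm _ (k.memT t ht), ← k.conn_comm t ht, hct, hcv]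
    · right
      intro hmem
      obtain ⟨u, hu, hueq⟩ := List.mem_map.mp hmem
      refine hni (List.mem_map.mpr ⟨L.conn u, hL.conn_mem u hu, ?_⟩)
      rw [m.conn_comm u hu, hueq, hcv]
  lab_some := fun e he => hG.lab_some e (mem_cmpl_E.mp he).1
  arity_src := by
    intro e he l hl
    rw [cmpl_sourcesOf hL he]
    exact hG.arity_src e (mem_cmpl_E.mp he).1 l hl
  arity_tgt := by
    intro e he l hl
    rw [cmpl_targetsOf hL he]
    exact hG.arity_tgt e (mem_cmpl_E.mp he).1 l hl

/-! ### The two legs of the pushout square -/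

/-- `K → C`, the restriction of `m ∘ k`. -/
def cOne (hK : K.WF) (k : LHom K L) (m : LHom L G) (hedge : K.E = ∅) :
    LHom K (cmpl K L G k m) where
  hT v := if v ∈ K.T then m.hT (k.hT v) else v
  hS v := if v ∈ K.S then m.hS (k.hS v) else v
  hE e := e
  normT := fun v hv => if_neg hv
  normS := fun v hv => if_neg hv
  normE := fun _ _ => rfl
  memT := by
    intro t ht
    beta_reduce
    rw [if_pos ht, mem_cmpl_T]
    exact ⟨m.memT _ (k.memT t ht), Or.inl (List.mem_map_of_mem ht)⟩
  memS := by
    intro t ht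
    beta_reduce
    rw [if_pos ht, mem_cmpl_S]
    exact ⟨m.memS _ (k.memS t ht), Or.inl (List.mem_map_of_mem ht)⟩
  memE := fun e he => absurd he (by simp [hedge])
  ell_comm := by
    intro t ht
    show G.ell (if t ∈ K.T then _ else _) = _
    rw [if_pos ht, m.ell_comm _ (k.memT t ht), k.ell_comm t ht, K_ell_none hK hedge ht]
    rfl
  r_comm := by
    intro t ht
    show G.r (if t ∈ K.S then _ else _) = _
    rw [if_pos ht, m.r_comm _ (k.memS t ht), k.r_comm t ht, K_r_none hK hedge ht]
    rfl
  conn_comm := by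
    intro t ht
    show (if K.conn t ∈ K.S then _ else _) = G.conn (if t ∈ K.T then _ else _)
    rw [if_pos ht, if_pos (hK.conn_mem t ht), k.conn_comm t ht, m.conn_comm _ (k.memT t ht)]
  lab_comm := fun e he => absurd he (by simp [hedge])
  src_ord := fun e he => absurd he (by simp [hedge])
  tgt_ord := fun e he => absurd he (by simp [hedge])

/-- `C → G`, the inclusion. -/
def cTwo (hL : L.WF) (k : LHom K L) (m : LHom L G) : LHom (cmpl K L G k m) G where
  hT v := v
  hS v := v
  hE e := e
  normT := fun _ _ => rfl
  normS := fun _ _ => rfl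
  normE := fun _ _ => rfl
  memT := fun v hv => List.mem_of_mem_filter hv
  memS := fun v hv => List.mem_of_mem_filter hv
  memE := fun e he => (Finset.mem_filter.mp he).1
  ell_comm := by
    intro v hv
    show G.ell v = ((cmpl K L G k m).ell v).map _
    show G.ell v = (G.ell v).map _
    cases G.ell v <;> rfl
  r_comm := by
    intro v hv
    show G.r v = ((cmpl K L G k m).r v).map _
    show G.r v = (G.r v).map _
    cases G.r v <;> rfl
  conn_comm := fun v hv => rfl
  lab_comm := fun e he => rfl
  src_ord := by
    intro e he
    rw [show (cmpl K L G k m).sourcesOf e = G.sourcesOf e from cmpl_sourcesOf hL he]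
    exact (List.map_id' _).symm
  tgt_ord := by
    intro e he
    rw [show (cmpl K L G k m).targetsOf e = G.targetsOf e from cmpl_targetsOf hL he]
    exact (List.map_id' _).symm

/-! ### The mediating morphism -/

/-- Canonical preimage along `h` in the list `A`. -/
def inv0 (A : List ℕ) (h : ℕ → ℕ) (v : ℕ) : ℕ := (A.find? fun u => h u = v).getD 0

lemma inv0_mem {A : List ℕ} {h : ℕ → ℕ} {v : ℕ} (hv : v ∈ A.map h) :
    inv0 A h v ∈ A ∧ h (inv0 A h v) = v := by
  obtain ⟨u, hu, rfl⟩ := List.mem_map.mp hv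
  have hs : (A.find? fun u' => decide (h u' = h u)).isSome :=
    List.find?_isSome.mpr ⟨u, hu, by simp⟩
  obtain ⟨u', hf⟩ := Option.isSome_iff_exists.mp hs
  unfold inv0
  rw [hf, Option.getD_some]
  exact ⟨List.mem_of_find?_eq_some hf, by simpa using List.find?_some hf⟩

/-- Gluing of `φ` (on the image of `h`) and `ψ` (off the image) on carrier `B`. -/
def dfun (A B : List ℕ) (h φ ψ : ℕ → ℕ) (v : ℕ) : ℕ :=
  if v ∈ B then (if v ∈ A.map h then φ (inv0 A h v) else ψ v) else v

lemma dfun_img' {A B : List ℕ} {h φ ψ : ℕ → ℕ} {v : ℕ} (hB : v ∈ B)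
    (himg : v ∈ A.map h) : dfun A B h φ ψ v = φ (inv0 A h v) := by
  rw [dfun, if_pos hB, if_pos himg]

lemma dfun_img {A B : List ℕ} {h φ ψ : ℕ → ℕ}
    (inj : ∀ u ∈ A, ∀ v ∈ A, h u = h v → u = v) {u : ℕ} (hu : u ∈ A) (hB : h u ∈ B) :
    dfun A B h φ ψ (h u) = φ u := by
  have himg : h u ∈ A.map h := List.mem_map_of_mem hu
  obtain ⟨hm, hh⟩ := inv0_mem himg
  rw [dfun_img' hB himg, inj _ hm _ hu hh]

lemma dfun_out {A B : List ℕ} {h φ ψ : ℕ → ℕ} {v : ℕ} (hB : v ∈ B)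
    (hni : v ∉ A.map h) : dfun A B h φ ψ v = ψ v := by
  rw [dfun, if_pos hB, if_neg hni]

lemma dfun_not {A B : List ℕ} {h φ ψ : ℕ → ℕ} {v : ℕ} (hB : v ∉ B) :
    dfun A B h φ ψ v = v := by
  rw [dfun, if_neg hB]

/-- Finset version, for edges. -/
noncomputable def dfunE (A B : Finset ℕ) (h φ ψ : ℕ → ℕ) (e : ℕ) : ℕ :=
  if e ∈ B then (if e ∈ A.image h then φ (inv0 A.toList h e) else ψ e) else e

lemma memE_to_map {A : Finset ℕ} {h : ℕ → ℕ} {e : ℕ} (he : e ∈ A.image h) :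
    e ∈ A.toList.map h := by
  obtain ⟨u, hu, rfl⟩ := Finset.mem_image.mp he
  exact List.mem_map_of_mem (Finset.mem_toList.mpr hu)

lemma dfunE_img' {A B : Finset ℕ} {h φ ψ : ℕ → ℕ} {e : ℕ} (hB : e ∈ B)
    (himg : e ∈ A.image h) : dfunE A B h φ ψ e = φ (inv0 A.toList h e) := by
  rw [dfunE, if_pos hB, if_pos himg]

lemma dfunE_img {A B : Finset ℕ} {h φ ψ : ℕ → ℕ}
    (inj : ∀ u ∈ A, ∀ v ∈ A, h u = h v → u = v) {u : ℕ} (hu : u ∈ A) (hB : h u ∈ B) :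
    dfunE A B h φ ψ (h u) = φ u := by
  have himg : h u ∈ A.image h := Finset.mem_image_of_mem h hu
  obtain ⟨hm, hh⟩ := inv0_mem (memE_to_map himg)
  rw [dfunE_img' hB himg, inj _ (Finset.mem_toList.mp hm) _ hu hh]

lemma dfunE_out {A B : Finset ℕ} {h φ ψ : ℕ → ℕ} {e : ℕ} (hB : e ∈ B)
    (hni : e ∉ A.image h) : dfunE A B h φ ψ e = ψ e := by
  rw [dfunE, if_pos hB, if_neg hni]

lemma dfunE_not {A B : Finset ℕ} {h φ ψ : ℕ → ℕ} {e : ℕ} (hB : e ∉ B) :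
    dfunE A B h φ ψ e = e := by
  rw [dfunE, if_neg hB]

lemma dfun_cmplT {W : LinHyp Sg} {f : LHom L W} {g : LHom (cmpl K L G k m) W}
    (injT : ∀ u ∈ L.T, ∀ v ∈ L.T, m.hT u = m.hT v → u = v)
    (αT : ∀ t ∈ K.T, f.hT (k.hT t) = g.hT (m.hT (k.hT t)))
    {v : ℕ} (hv : v ∈ (cmpl K L G k m).T) :
    dfun L.T G.T m.hT f.hT g.hT v = g.hT v := by
  obtain ⟨hvG, hcond⟩ := mem_cmpl_T.mp hv
  by_cases himg : v ∈ L.T.map m.hT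
  · rcases hcond with hkk | hni
    · obtain ⟨t, ht, rfl⟩ := List.mem_map.mp hkk
      rw [dfun_img injT (k.memT t ht) (m.memT _ (k.memT t ht))]
      exact αT t ht
    · exact absurd himg hni
  · exact dfun_out hvG himg

lemma dfun_cmplS {W : LinHyp Sg} {f : LHom L W} {g : LHom (cmpl K L G k m) W}
    (injS : ∀ u ∈ L.S, ∀ v ∈ L.S, m.hS u = m.hS v → u = v)
    (αS : ∀ t ∈ K.S, f.hS (k.hS t) = g.hS (m.hS (k.hS t)))
    {v : ℕ} (hv : v ∈ (cmpl K L G k m).S) :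
    dfun L.S G.S m.hS f.hS g.hS v = g.hS v := by
  obtain ⟨hvG, hcond⟩ := mem_cmpl_S.mp hv
  by_cases himg : v ∈ L.S.map m.hS
  · rcases hcond with hkk | hni
    · obtain ⟨t, ht, rfl⟩ := List.mem_map.mp hkk
      rw [dfun_img injS (k.memS t ht) (m.memS _ (k.memS t ht))]
      exact αS t ht
    · exact absurd himg hni
  · exact dfun_out hvG himg

lemma dfunE_cmpl {W : LinHyp Sg} {f : LHom L W} {g : LHom (cmpl K L G k m) W}
    {e : ℕ} (he : e ∈ (cmpl K L G k m).E) :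
    dfunE L.E G.E m.hE f.hE g.hE e = g.hE e := by
  obtain ⟨heG, hni⟩ := mem_cmpl_E.mp he
  exact dfunE_out heG hni

/-- The mediating morphism out of the pushout. -/
noncomputable def descHom (W : LinHyp Sg) (k : LHom K L) (m : LHom L G) (f : LHom L W)
    (g : LHom (cmpl K L G k m) W) (hK : K.WF) (hL : L.WF) (hG : G.WF) (hedge : K.E = ∅)
    (injT : ∀ u ∈ L.T, ∀ v ∈ L.T, m.hT u = m.hT v → u = v)
    (injS : ∀ u ∈ L.S, ∀ v ∈ L.S, m.hS u = m.hS v → u = v)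
    (injE : ∀ u ∈ L.E, ∀ v ∈ L.E, m.hE u = m.hE v → u = v)
    (αT : ∀ t ∈ K.T, f.hT (k.hT t) = g.hT (m.hT (k.hT t)))
    (αS : ∀ t ∈ K.S, f.hS (k.hS t) = g.hS (m.hS (k.hS t))) : LHom G W where
  hT := dfun L.T G.T m.hT f.hT g.hT
  hS := dfun L.S G.S m.hS f.hS g.hS
  hE := dfunE L.E G.E m.hE f.hE g.hE
  normT := fun _ hv => dfun_not hv
  normS := fun _ hv => dfun_not hv
  normE := fun _ he => dfunE_not he
  memT := by
    intro v hv
    by_cases himg : v ∈ L.T.map m.hT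
    · obtain ⟨hm, hh⟩ := inv0_mem himg
      rw [dfun_img' hv himg]
      exact f.memT _ hm
    · rw [dfun_out hv himg]
      exact g.memT v (mem_cmpl_T.mpr ⟨hv, Or.inr himg⟩)
  memS := by
    intro v hv
    by_cases himg : v ∈ L.S.map m.hS
    · obtain ⟨hm, hh⟩ := inv0_mem himg
      rw [dfun_img' hv himg]
      exact f.memS _ hm
    · rw [dfun_out hv himg]
      exact g.memS v (mem_cmpl_S.mpr ⟨hv, Or.inr himg⟩)
  memE := by
    intro e he
    by_cases himg : e ∈ L.E.image m.hE
    · obtain ⟨hm, hh⟩ := inv0_mem (memE_to_map himg)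
      rw [dfunE_img' he himg]
      exact f.memE _ (Finset.mem_toList.mp hm)
    · rw [dfunE_out he himg]
      exact g.memE e (mem_cmpl_E.mpr ⟨he, himg⟩)
  ell_comm := by
    intro v hv
    by_cases himg : v ∈ L.T.map m.hT
    · obtain ⟨hm, hh⟩ := inv0_mem himg
      have hGell : G.ell v = (L.ell (inv0 L.T m.hT v)).map m.hE := by
        conv_lhs => rw [← hh]
        exact m.ell_comm _ hm
      rw [dfun_img' hv himg, f.ell_comm _ hm, hGell, Option.map_map]
      cases hcase : L.ell (inv0 L.T m.hT v) with
      | none => simp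
      | some e' =>
        have heL : e' ∈ L.E := hL.ell_mem _ hm e' hcase
        simp only [Option.map_some, Function.comp_apply]
        rw [dfunE_img injE heL (m.memE _ heL)]
    · have hvC : v ∈ (cmpl K L G k m).T := mem_cmpl_T.mpr ⟨hv, Or.inr himg⟩
      rw [dfun_out hv himg, g.ell_comm v hvC]
      show (G.ell v).map g.hE = (G.ell v).map _
      cases hcase : G.ell v with
      | none => rfl
      | some e =>
        have heG : e ∈ G.E := hG.ell_mem v hv e hcase
        have hni : e ∉ L.E.image m.hE := by
          intro hmem
          obtain ⟨e', he', rfl⟩ := Finset.mem_image.mp hmem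
          exact himg (target_in_map he' hv hcase)
        simp only [Option.map_some]
        rw [dfunE_out heG hni]
  r_comm := by
    intro v hv
    by_cases himg : v ∈ L.S.map m.hS
    · obtain ⟨hm, hh⟩ := inv0_mem himg
      have hGr : G.r v = (L.r (inv0 L.S m.hS v)).map m.hE := by
        conv_lhs => rw [← hh]
        exact m.r_comm _ hm
      rw [dfun_img' hv himg, f.r_comm _ hm, hGr, Option.map_map]
      cases hcase : L.r (inv0 L.S m.hS v) with
      | none => simp
      | some e' =>
        have heL : e' ∈ L.E := hL.r_mem _ hm e' hcase
        simp only [Option.map_some, Function.comp_apply]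
        rw [dfunE_img injE heL (m.memE _ heL)]
    · have hvC : v ∈ (cmpl K L G k m).S := mem_cmpl_S.mpr ⟨hv, Or.inr himg⟩
      rw [dfun_out hv himg, g.r_comm v hvC]
      show (G.r v).map g.hE = (G.r v).map _
      cases hcase : G.r v with
      | none => rfl
      | some e =>
        have heG : e ∈ G.E := hG.r_mem v hv e hcase
        have hni : e ∉ L.E.image m.hE := by
          intro hmem
          obtain ⟨e', he', rfl⟩ := Finset.mem_image.mp hmem
          exact himg (source_in_map he' hv hcase)
        simp only [Option.map_some]
        rw [dfunE_out heG hni]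
  conn_comm := by
    intro v hv
    by_cases himg : v ∈ L.T.map m.hT
    · obtain ⟨hm, hh⟩ := inv0_mem himg
      have hGc : G.conn v = m.hS (L.conn (inv0 L.T m.hT v)) := by
        conv_lhs => rw [← hh]
        rw [← m.conn_comm _ hm]
      rw [dfun_img' hv himg, ← f.conn_comm _ hm, hGc]
      exact dfun_img injS (hL.conn_mem _ hm) (m.memS _ (hL.conn_mem _ hm))
    · have hvC : v ∈ (cmpl K L G k m).T := mem_cmpl_T.mpr ⟨hv, Or.inr himg⟩
      rw [dfun_out hv himg, ← g.conn_comm v hvC]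
      exact dfun_cmplS injS αS ((cmpl_wf hK hL hG k m hedge).conn_mem v hvC)
  lab_comm := by
    intro e he
    by_cases himg : e ∈ L.E.image m.hE
    · obtain ⟨hm, hh⟩ := inv0_mem (memE_to_map himg)
      have hmE : inv0 L.E.toList m.hE e ∈ L.E := Finset.mem_toList.mp hm
      have hGl : G.lab e = L.lab (inv0 L.E.toList m.hE e) := by
        conv_lhs => rw [← hh]
        exact m.lab_comm _ hmE
      rw [dfunE_img' he himg, f.lab_comm _ hmE, hGl]
    · have heC : e ∈ (cmpl K L G k m).E := mem_cmpl_E.mpr ⟨he, himg⟩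
      rw [dfunE_out he himg, g.lab_comm e heC]
      rfl
  src_ord := by
    intro e he
    by_cases himg : e ∈ L.E.image m.hE
    · obtain ⟨hm, hh⟩ := inv0_mem (memE_to_map himg)
      have hmE : inv0 L.E.toList m.hE e ∈ L.E := Finset.mem_toList.mp hm
      have hGs : G.sourcesOf e = (L.sourcesOf (inv0 L.E.toList m.hE e)).map m.hS := by
        conv_lhs => rw [← hh]
        exact m.src_ord _ hmE
      rw [dfunE_img' he himg, f.src_ord _ hmE, hGs, List.map_map]
      apply List.map_congr_left
      intro w hw
      have hwS : w ∈ L.S := List.mem_of_mem_filter hw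
      exact (dfun_img injS hwS (m.memS w hwS)).symm
    · have heC : e ∈ (cmpl K L G k m).E := mem_cmpl_E.mpr ⟨he, himg⟩
      rw [dfunE_out he himg, g.src_ord e heC, cmpl_sourcesOf hL heC]
      apply List.map_congr_left
      intro w hw
      have hwS : w ∈ G.S := List.mem_of_mem_filter hw
      have hwr : G.r w = some e := by simpa using (List.mem_filter.mp hw).2
      exact (dfun_out hwS (source_not_map hL hwS hwr himg)).symm
  tgt_ord := by
    intro e he
    by_cases himg : e ∈ L.E.image m.hE
    · obtain ⟨hm, hh⟩ := inv0_mem (memE_to_map himg)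
      have hmE : inv0 L.E.toList m.hE e ∈ L.E := Finset.mem_toList.mp hm
      have hGt : G.targetsOf e = (L.targetsOf (inv0 L.E.toList m.hE e)).map m.hT := by
        conv_lhs => rw [← hh]
        exact m.tgt_ord _ hmE
      rw [dfunE_img' he himg, f.tgt_ord _ hmE, hGt, List.map_map]
      apply List.map_congr_left
      intro w hw
      have hwT : w ∈ L.T := List.mem_of_mem_filter hw
      exact (dfun_img injT hwT (m.memT w hwT)).symm
    · have heC : e ∈ (cmpl K L G k m).E := mem_cmpl_E.mpr ⟨he, himg⟩
      rw [dfunE_out he himg, g.tgt_ord e heC, cmpl_targetsOf hL heC]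
      apply List.map_congr_left
      intro w hw
      have hwT : w ∈ G.T := List.mem_of_mem_filter hw
      have hwr : G.ell w = some e := by simpa using (List.mem_filter.mp hw).2
      exact (dfun_out hwT (target_not_map hL hwT hwr himg)).symm

/-! ### Composition helper lemmas in the category -/

lemma comp_hT {F G' H : LHypObj Sg} (a : F ⟶ G') (b : G' ⟶ H) {x : ℕ}
    (hx : x ∈ F.1.T) : (a ≫ b).hT x = b.hT (a.hT x) := if_pos hx

lemma comp_hS {F G' H : LHypObj Sg} (a : F ⟶ G') (b : G' ⟶ H) {x : ℕ}
    (hx : x ∈ F.1.S) : (a ≫ b).hS x = b.hS (a.hS x) := if_pos hx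

lemma comp_hE {F G' H : LHypObj Sg} (a : F ⟶ G') (b : G' ⟶ H) {x : ℕ}
    (hx : x ∈ F.1.E) : (a ≫ b).hE x = b.hE (a.hE x) := if_pos hx

lemma comp_hT_out {F G' H : LHypObj Sg} (a : F ⟶ G') (b : G' ⟶ H) {x : ℕ}
    (hx : x ∉ F.1.T) : (a ≫ b).hT x = x := if_neg hx

lemma comp_hS_out {F G' H : LHypObj Sg} (a : F ⟶ G') (b : G' ⟶ H) {x : ℕ}
    (hx : x ∉ F.1.S) : (a ≫ b).hS x = x := if_neg hx

lemma comp_hE_out {F G' H : LHypObj Sg} (a : F ⟶ G') (b : G' ⟶ H) {x : ℕ}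
    (hx : x ∉ F.1.E) : (a ≫ b).hE x = x := if_neg hx

/-- **I-matchings.** For any rewrite rule `L ← K → R` — a span
of monomorphisms in `LHyp_Σ` with `K` edgeless — and any linear hypergraph
`G`, every monomorphism `L → G` in `LHyp_Σ` is an I-matching; that is, the
composite `K → L → G` has a pushout complement `K → C → G` in `LHyp_Σ`. -/
theorem i_matchings {Sg : Sig} (K L R G : LHypObj Sg)
    (k : K ⟶ L) (ρ : K ⟶ R) (hk : Mono k) (hρ : Mono ρ)
    (hedgeless : K.1.E = ∅)
    (m : L ⟶ G) (hm : Mono m) :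
    ∃ (C : LHypObj Sg) (c₁ : K ⟶ C) (c₂ : C ⟶ G), IsPushout k c₁ m c₂ := by
  obtain ⟨injT, injS, injE⟩ := mono_inj m hm
  let C : LHypObj Sg := ⟨cmpl K.1 L.1 G.1 k m, cmpl_wf K.2 L.2 G.2 k m hedgeless⟩
  let c₁ : K ⟶ C := cOne K.2 k m hedgeless
  let c₂ : C ⟶ G := cTwo L.2 k m
  have comm : k ≫ m = c₁ ≫ c₂ := by
    refine LHom.ext ?_ ?_ ?_ <;> funext x
    · by_cases hx : x ∈ K.1.T
      · rw [comp_hT k m hx, comp_hT c₁ c₂ hx]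
        show m.hT (k.hT x) = (if x ∈ K.1.T then m.hT (k.hT x) else x)
        rw [if_pos hx]
      · rw [comp_hT_out k m hx, comp_hT_out c₁ c₂ hx]
    · by_cases hx : x ∈ K.1.S
      · rw [comp_hS k m hx, comp_hS c₁ c₂ hx]
        show m.hS (k.hS x) = (if x ∈ K.1.S then m.hS (k.hS x) else x)
        rw [if_pos hx]
      · rw [comp_hS_out k m hx, comp_hS_out c₁ c₂ hx]
    · by_cases hx : x ∈ K.1.E
      · exact absurd hx (by simp [hedgeless])
      · rw [comp_hE_out k m hx, comp_hE_out c₁ c₂ hx]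
  refine ⟨C, c₁, c₂, ?_⟩
  have hα : ∀ (s : Limits.PushoutCocone k c₁),
      (∀ t ∈ K.1.T, s.inl.hT (k.hT t) = s.inr.hT (m.hT (k.hT t))) ∧
      (∀ t ∈ K.1.S, s.inl.hS (k.hS t) = s.inr.hS (m.hS (k.hS t))) := by
    intro s
    constructor
    · intro t ht
      have h := congrFun (congrArg LHom.hT s.condition) t
      rw [comp_hT k s.inl ht, comp_hT c₁ s.inr ht] at h
      rwa [show c₁.hT t = m.hT (k.hT t) from if_pos ht] at h
    · intro t ht
      have h := congrFun (congrArg LHom.hS s.condition) t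
      rw [comp_hS k s.inl ht, comp_hS c₁ s.inr ht] at h
      rwa [show c₁.hS t = m.hS (k.hS t) from if_pos ht] at h
  exact IsPushout.of_isColimit (Limits.PushoutCocone.IsColimit.mk comm
    (fun s => descHom s.pt.1 k m s.inl s.inr K.2 L.2 G.2 hedgeless injT injS injE
      (hα s).1 (hα s).2)
    (by
      intro s
      refine LHom.ext ?_ ?_ ?_ <;> funext x
      · by_cases hx : x ∈ L.1.T
        · rw [comp_hT m _ hx]
          exact dfun_img injT hx (m.memT x hx)
        · rw [comp_hT_out m _ hx]
          exact (s.inl.normT x hx).symm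
      · by_cases hx : x ∈ L.1.S
        · rw [comp_hS m _ hx]
          exact dfun_img injS hx (m.memS x hx)
        · rw [comp_hS_out m _ hx]
          exact (s.inl.normS x hx).symm
      · by_cases hx : x ∈ L.1.E
        · rw [comp_hE m _ hx]
          exact dfunE_img injE hx (m.memE x hx)
        · rw [comp_hE_out m _ hx]
          exact (s.inl.normE x hx).symm)
    (by
      intro s
      obtain ⟨αT', αS'⟩ := hα s
      refine LHom.ext ?_ ?_ ?_ <;> funext x
      · by_cases hx : x ∈ C.1.T
        · rw [comp_hT c₂ _ hx]
          exact dfun_cmplT injT αT' hx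
        · rw [comp_hT_out c₂ _ hx]
          exact (s.inr.normT x hx).symm
      · by_cases hx : x ∈ C.1.S
        · rw [comp_hS c₂ _ hx]
          exact dfun_cmplS injS αS' hx
        · rw [comp_hS_out c₂ _ hx]
          exact (s.inr.normS x hx).symm
      · by_cases hx : x ∈ C.1.E
        · rw [comp_hE c₂ _ hx]
          exact dfunE_cmpl hx
        · rw [comp_hE_out c₂ _ hx]
          exact (s.inr.normE x hx).symm)
    (by
      intro s h' h1 h2
      obtain ⟨αT', αS'⟩ := hα s
      refine LHom.ext ?_ ?_ ?_ <;> funext x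
      · by_cases hx : x ∈ G.1.T
        · by_cases himg : x ∈ L.1.T.map m.hT
          · obtain ⟨hm', hh⟩ := inv0_mem himg
            have e1 : h'.hT x = s.inl.hT (inv0 L.1.T m.hT x) := by
              conv_lhs => rw [← hh]
              rw [← comp_hT m h' hm', h1]
            rw [e1]
            exact (dfun_img' hx himg).symm
          · have hxC : x ∈ C.1.T := mem_cmpl_T.mpr ⟨hx, Or.inr himg⟩
            have e1 : h'.hT x = s.inr.hT x := by
              have h := congrFun (congrArg LHom.hT h2) x
              rw [comp_hT c₂ h' hxC] at h
              exact h
            rw [e1]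
            exact (dfun_cmplT injT αT' hxC).symm
        · rw [h'.normT x hx]
          exact (dfun_not hx).symm
      · by_cases hx : x ∈ G.1.S
        · by_cases himg : x ∈ L.1.S.map m.hS
          · obtain ⟨hm', hh⟩ := inv0_mem himg
            have e1 : h'.hS x = s.inl.hS (inv0 L.1.S m.hS x) := by
              conv_lhs => rw [← hh]
              rw [← comp_hS m h' hm', h1]
            rw [e1]
            exact (dfun_img' hx himg).symm
          · have hxC : x ∈ C.1.S := mem_cmpl_S.mpr ⟨hx, Or.inr himg⟩
            have e1 : h'.hS x = s.inr.hS x := by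
              have h := congrFun (congrArg LHom.hS h2) x
              rw [comp_hS c₂ h' hxC] at h
              exact h
            rw [e1]
            exact (dfun_cmplS injS αS' hxC).symm
        · rw [h'.normS x hx]
          exact (dfun_not hx).symm
      · by_cases hx : x ∈ G.1.E
        · by_cases himg : x ∈ L.1.E.image m.hE
          · obtain ⟨hm', hh⟩ := inv0_mem (memE_to_map himg)
            have e1 : h'.hE x = s.inl.hE (inv0 L.1.E.toList m.hE x) := by
              conv_lhs => rw [← hh]
              rw [← comp_hE m h' (Finset.mem_toList.mp hm'), h1]
            rw [e1]
            exact (dfunE_img' hx himg).symm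
          · have hxC : x ∈ C.1.E := mem_cmpl_E.mpr ⟨hx, himg⟩
            have e1 : h'.hE x = s.inr.hE x := by
              have h := congrFun (congrArg LHom.hE h2) x
              rw [comp_hE c₂ h' hxC] at h
              exact h
            rw [e1]
            exact (dfunE_cmpl hxC).symm
        · rw [h'.normE x hx]
          exact (dfunE_not hx).symm))

end Paper
end

section
/- Bifunctoriality: for any m, n ∈ ℕ, id_m ⊗ id_n ≅ id_{m+n}, and for any linear hypergraphs F : m → n, G : r → s, H : n → p and K : s → t over Σ, (F ⊗ G) ⨾ (H ⊗ K) ≅ (F ⨾ H) ⊗ (G ⨾ K). -/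
namespace Paper

namespace LinHyp

variable {Sg : Sig}

/-! ### Generic list helpers -/

theorem filter_map_congr' {l : List ℕ} {f : ℕ → ℕ} {p q : ℕ → Bool}
    (h : ∀ k ∈ l, p (f k) = q k) : (l.map f).filter p = (l.filter q).map f := by
  rw [List.filter_map]
  exact congrArg (List.map f) (List.filter_congr (by simpa [Function.comp] using h))

theorem filter_map_nil' {l : List ℕ} {f : ℕ → ℕ} {p : ℕ → Bool}
    (h : ∀ k ∈ l, p (f k) = false) : (l.map f).filter p = [] := by
  rw [filter_map_congr' (q := fun _ => false) h]; simp

theorem indexOf_map' {l : List ℕ} {f : ℕ → ℕ} (hf : ∀ x y, f x = f y → x = y) (w : ℕ) :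
    (l.map f).idxOf (f w) = l.idxOf w := by
  induction l with
  | nil => rfl
  | cons a l ih =>
    by_cases h : a = w
    · simp [h, List.idxOf_cons]
    · have h1 : (f a == f w) = false := by
        simp only [beq_eq_false_iff_ne, ne_eq]
        exact fun hfa => h (hf _ _ hfa)
      have h2 : (a == w) = false := by simpa using h
      simp [List.idxOf_cons, h1, h2, ih]

theorem getD_map' {l : List ℕ} {f : ℕ → ℕ} {i d d' : ℕ} (h : i < l.length) :
    (l.map f).getD i d = f (l.getD i d') := by
  rw [List.getD_eq_getElem _ _ (by simpa using h), List.getD_eq_getElem _ _ h]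
  simp

theorem memD0 {l : List ℕ} {k : ℕ} : (2*k) ∈ l.map (fun x => 2*x) ↔ k ∈ l := by
  simp only [List.mem_map]
  constructor
  · rintro ⟨a, ha, h⟩
    have : a = k := by omega
    subst this; exact ha
  · exact fun h => ⟨k, h, rfl⟩

theorem memD1 {l : List ℕ} {k : ℕ} : (2*k+1) ∈ l.map (fun x => 2*x+1) ↔ k ∈ l := by
  simp only [List.mem_map]
  constructor
  · rintro ⟨a, ha, h⟩
    have : a = k := by omega
    subst this; exact ha
  · exact fun h => ⟨k, h, rfl⟩

theorem not_memD0 {l : List ℕ} {k : ℕ} : (2*k+1) ∉ l.map (fun x => 2*x) := by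
  simp only [List.mem_map]
  rintro ⟨a, _, h⟩; omega

theorem not_memD1 {l : List ℕ} {k : ℕ} : (2*k) ∉ l.map (fun x => 2*x+1) := by
  simp only [List.mem_map]
  rintro ⟨a, _, h⟩; omega

theorem fmemD0 {s : Finset ℕ} {k : ℕ} : (2*k) ∈ s.image (fun x => 2*x) ↔ k ∈ s := by
  simp only [Finset.mem_image]
  constructor
  · rintro ⟨a, ha, h⟩
    have : a = k := by omega
    subst this; exact ha
  · exact fun h => ⟨k, h, rfl⟩

theorem fmemD1 {s : Finset ℕ} {k : ℕ} : (2*k+1) ∈ s.image (fun x => 2*x+1) ↔ k ∈ s := by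
  simp only [Finset.mem_image]
  constructor
  · rintro ⟨a, ha, h⟩
    have : a = k := by omega
    subst this; exact ha
  · exact fun h => ⟨k, h, rfl⟩

theorem not_fmemD0 {s : Finset ℕ} {k : ℕ} : (2*k+1) ∉ s.image (fun x => 2*x) := by
  simp only [Finset.mem_image]
  rintro ⟨a, _, h⟩; omega

theorem not_fmemD1 {s : Finset ℕ} {k : ℕ} : (2*k) ∉ s.image (fun x => 2*x+1) := by
  simp only [Finset.mem_image]
  rintro ⟨a, _, h⟩; omega

/-! ### rename lemmas -/

theorem renL_T (F : LinHyp Sg) : (renL F).T = F.T.map (fun x => 2*x) := rfl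
theorem renL_S (F : LinHyp Sg) : (renL F).S = F.S.map (fun x => 2*x) := rfl
theorem renL_E (F : LinHyp Sg) : (renL F).E = F.E.image (fun x => 2*x) := rfl
theorem renR_T (F : LinHyp Sg) : (renR F).T = F.T.map (fun x => 2*x+1) := rfl
theorem renR_S (F : LinHyp Sg) : (renR F).S = F.S.map (fun x => 2*x+1) := rfl
theorem renR_E (F : LinHyp Sg) : (renR F).E = F.E.image (fun x => 2*x+1) := rfl

theorem div2_even (k : ℕ) : (2*k)/2 = k := by omega
theorem div2_odd (k : ℕ) : (2*k+1)/2 = k := by omega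

theorem renL_ell (F : LinHyp Sg) (v : ℕ) :
    (renL F).ell (2*v) = (F.ell v).map (fun x => 2*x) := by
  show (F.ell ((2*v)/2)).map _ = _
  rw [div2_even]

theorem renL_r (F : LinHyp Sg) (v : ℕ) :
    (renL F).r (2*v) = (F.r v).map (fun x => 2*x) := by
  show (F.r ((2*v)/2)).map _ = _
  rw [div2_even]

theorem renL_conn (F : LinHyp Sg) (v : ℕ) : (renL F).conn (2*v) = 2 * F.conn v := by
  show 2 * F.conn ((2*v)/2) = _
  rw [div2_even]

theorem renL_lab (F : LinHyp Sg) (e : ℕ) : (renL F).lab (2*e) = F.lab e := by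
  show F.lab ((2*e)/2) = _
  rw [div2_even]

theorem renR_ell (F : LinHyp Sg) (v : ℕ) :
    (renR F).ell (2*v+1) = (F.ell v).map (fun x => 2*x+1) := by
  show (F.ell ((2*v+1)/2)).map _ = _
  rw [div2_odd]

theorem renR_r (F : LinHyp Sg) (v : ℕ) :
    (renR F).r (2*v+1) = (F.r v).map (fun x => 2*x+1) := by
  show (F.r ((2*v+1)/2)).map _ = _
  rw [div2_odd]

theorem renR_conn (F : LinHyp Sg) (v : ℕ) : (renR F).conn (2*v+1) = 2 * F.conn v + 1 := by
  show 2 * F.conn ((2*v+1)/2) + 1 = _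
  rw [div2_odd]

theorem renR_lab (F : LinHyp Sg) (e : ℕ) : (renR F).lab (2*e+1) = F.lab e := by
  show F.lab ((2*e+1)/2) = _
  rw [div2_odd]

theorem renL_inputs (F : LinHyp Sg) : (renL F).inputs = F.inputs.map (fun x => 2*x) := by
  unfold inputs
  rw [renL_T]
  exact filter_map_congr' fun k _ => by rw [renL_ell]; simp [Option.map_eq_none_iff]

theorem renL_outputs (F : LinHyp Sg) : (renL F).outputs = F.outputs.map (fun x => 2*x) := by
  unfold outputs
  rw [renL_S]
  exact filter_map_congr' fun k _ => by rw [renL_r]; simp [Option.map_eq_none_iff]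

theorem renR_inputs (F : LinHyp Sg) : (renR F).inputs = F.inputs.map (fun x => 2*x+1) := by
  unfold inputs
  rw [renR_T]
  exact filter_map_congr' fun k _ => by rw [renR_ell]; simp [Option.map_eq_none_iff]

theorem renR_outputs (F : LinHyp Sg) : (renR F).outputs = F.outputs.map (fun x => 2*x+1) := by
  unfold outputs
  rw [renR_S]
  exact filter_map_congr' fun k _ => by rw [renR_r]; simp [Option.map_eq_none_iff]

end LinHyp

end Paper
namespace Paper

namespace LinHyp

variable {Sg : Sig}

/-! ### tensor lemmas -/

theorem tensor_T (F G : LinHyp Sg) :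
    (tensor F G).T = F.T.map (fun x => 2*x) ++ G.T.map (fun x => 2*x+1) := rfl

theorem tensor_S (F G : LinHyp Sg) :
    (tensor F G).S = F.S.map (fun x => 2*x) ++ G.S.map (fun x => 2*x+1) := rfl

theorem tensor_E (F G : LinHyp Sg) :
    (tensor F G).E = F.E.image (fun x => 2*x) ∪ G.E.image (fun x => 2*x+1) := rfl

theorem tensor_ell_even (F G : LinHyp Sg) {k : ℕ} (hk : k ∈ F.T) :
    (tensor F G).ell (2*k) = (F.ell k).map (fun x => 2*x) := by
  show (if 2*k ∈ (renL F).T then (renL F).ell (2*k) else (renR G).ell (2*k)) = _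
  rw [if_pos (by rw [renL_T]; exact memD0.mpr hk), renL_ell]

theorem tensor_ell_odd (F G : LinHyp Sg) (k : ℕ) :
    (tensor F G).ell (2*k+1) = (G.ell k).map (fun x => 2*x+1) := by
  show (if 2*k+1 ∈ (renL F).T then (renL F).ell (2*k+1) else (renR G).ell (2*k+1)) = _
  rw [if_neg (by rw [renL_T]; exact not_memD0), renR_ell]

theorem tensor_r_even (F G : LinHyp Sg) {k : ℕ} (hk : k ∈ F.S) :
    (tensor F G).r (2*k) = (F.r k).map (fun x => 2*x) := by
  show (if 2*k ∈ (renL F).S then (renL F).r (2*k) else (renR G).r (2*k)) = _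
  rw [if_pos (by rw [renL_S]; exact memD0.mpr hk), renL_r]

theorem tensor_r_odd (F G : LinHyp Sg) (k : ℕ) :
    (tensor F G).r (2*k+1) = (G.r k).map (fun x => 2*x+1) := by
  show (if 2*k+1 ∈ (renL F).S then (renL F).r (2*k+1) else (renR G).r (2*k+1)) = _
  rw [if_neg (by rw [renL_S]; exact not_memD0), renR_r]

theorem tensor_conn_even (F G : LinHyp Sg) {k : ℕ} (hk : k ∈ F.T) :
    (tensor F G).conn (2*k) = 2 * F.conn k := by
  show (if 2*k ∈ (renL F).T then (renL F).conn (2*k) else (renR G).conn (2*k)) = _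
  rw [if_pos (by rw [renL_T]; exact memD0.mpr hk), renL_conn]

theorem tensor_conn_odd (F G : LinHyp Sg) (k : ℕ) :
    (tensor F G).conn (2*k+1) = 2 * G.conn k + 1 := by
  show (if 2*k+1 ∈ (renL F).T then (renL F).conn (2*k+1) else (renR G).conn (2*k+1)) = _
  rw [if_neg (by rw [renL_T]; exact not_memD0), renR_conn]

theorem tensor_lab_even (F G : LinHyp Sg) {a : ℕ} (ha : a ∈ F.E) :
    (tensor F G).lab (2*a) = F.lab a := by
  show (if 2*a ∈ (renL F).E then (renL F).lab (2*a) else (renR G).lab (2*a)) = _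
  rw [if_pos (by rw [renL_E]; exact fmemD0.mpr ha), renL_lab]

theorem tensor_lab_odd (F G : LinHyp Sg) (a : ℕ) :
    (tensor F G).lab (2*a+1) = G.lab a := by
  show (if 2*a+1 ∈ (renL F).E then (renL F).lab (2*a+1) else (renR G).lab (2*a+1)) = _
  rw [if_neg (by rw [renL_E]; exact not_fmemD0), renR_lab]

theorem tensor_inputs (F G : LinHyp Sg) :
    (tensor F G).inputs = F.inputs.map (fun x => 2*x) ++ G.inputs.map (fun x => 2*x+1) := by
  unfold inputs
  rw [tensor_T, List.filter_append]
  congr 1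
  · exact filter_map_congr' fun k hk => by
      rw [tensor_ell_even F G hk]; simp [Option.map_eq_none_iff]
  · exact filter_map_congr' fun k _ => by
      rw [tensor_ell_odd]; simp [Option.map_eq_none_iff]

theorem tensor_outputs (F G : LinHyp Sg) :
    (tensor F G).outputs = F.outputs.map (fun x => 2*x) ++ G.outputs.map (fun x => 2*x+1) := by
  unfold outputs
  rw [tensor_S, List.filter_append]
  congr 1
  · exact filter_map_congr' fun k hk => by
      rw [tensor_r_even F G hk]; simp [Option.map_eq_none_iff]
  · exact filter_map_congr' fun k _ => by
      rw [tensor_r_odd]; simp [Option.map_eq_none_iff]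

theorem mapD0_eq_some {o : Option ℕ} {a : ℕ} :
    (o.map (fun x => 2*x) = some (2*a)) ↔ o = some a := by
  cases o with
  | none => simp
  | some b => simp only [Option.map_some, Option.some_inj]; omega

theorem mapD1_eq_some {o : Option ℕ} {a : ℕ} :
    (o.map (fun x => 2*x+1) = some (2*a+1)) ↔ o = some a := by
  cases o with
  | none => simp
  | some b => simp only [Option.map_some, Option.some_inj]; omega

theorem mapD0_ne_odd {o : Option ℕ} {a : ℕ} : o.map (fun x => 2*x) ≠ some (2*a+1) := by
  cases o with
  | none => simp
  | some b => simp; omega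

theorem mapD1_ne_even {o : Option ℕ} {a : ℕ} : o.map (fun x => 2*x+1) ≠ some (2*a) := by
  cases o with
  | none => simp
  | some b => simp; omega

theorem tensor_sourcesOf_even (F G : LinHyp Sg) (a : ℕ) :
    (tensor F G).sourcesOf (2*a) = (F.sourcesOf a).map (fun x => 2*x) := by
  unfold sourcesOf
  rw [tensor_S, List.filter_append]
  have h2 : (G.S.map (fun x => 2*x+1)).filter (fun v => (tensor F G).r v = some (2*a)) = [] := by
    apply filter_map_nil'
    intro k _
    rw [tensor_r_odd]
    simpa using mapD1_ne_even
  rw [h2, List.append_nil]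
  exact filter_map_congr' fun k hk => by
    rw [tensor_r_even F G hk]
    simp [mapD0_eq_some]

theorem tensor_sourcesOf_odd (F G : LinHyp Sg) (a : ℕ) :
    (tensor F G).sourcesOf (2*a+1) = (G.sourcesOf a).map (fun x => 2*x+1) := by
  unfold sourcesOf
  rw [tensor_S, List.filter_append]
  have h1 : (F.S.map (fun x => 2*x)).filter (fun v => (tensor F G).r v = some (2*a+1)) = [] := by
    apply filter_map_nil'
    intro k hk
    rw [tensor_r_even F G hk]
    simpa using mapD0_ne_odd
  rw [h1, List.nil_append]
  exact filter_map_congr' fun k _ => by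
    rw [tensor_r_odd]
    simp [mapD1_eq_some]

theorem tensor_targetsOf_even (F G : LinHyp Sg) (a : ℕ) :
    (tensor F G).targetsOf (2*a) = (F.targetsOf a).map (fun x => 2*x) := by
  unfold targetsOf
  rw [tensor_T, List.filter_append]
  have h2 : (G.T.map (fun x => 2*x+1)).filter (fun v => (tensor F G).ell v = some (2*a)) = [] := by
    apply filter_map_nil'
    intro k _
    rw [tensor_ell_odd]
    simpa using mapD1_ne_even
  rw [h2, List.append_nil]
  exact filter_map_congr' fun k hk => by
    rw [tensor_ell_even F G hk]
    simp [mapD0_eq_some]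

theorem tensor_targetsOf_odd (F G : LinHyp Sg) (a : ℕ) :
    (tensor F G).targetsOf (2*a+1) = (G.targetsOf a).map (fun x => 2*x+1) := by
  unfold targetsOf
  rw [tensor_T, List.filter_append]
  have h1 : (F.T.map (fun x => 2*x)).filter (fun v => (tensor F G).ell v = some (2*a+1)) = [] := by
    apply filter_map_nil'
    intro k hk
    rw [tensor_ell_even F G hk]
    simpa using mapD0_ne_odd
  rw [h1, List.nil_append]
  exact filter_map_congr' fun k _ => by
    rw [tensor_ell_odd]
    simp [mapD1_eq_some]

end LinHyp

end Paper
namespace Paper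

namespace LinHyp

variable {Sg : Sig}

/-! ### comp lemmas -/

theorem comp_T (F G : LinHyp Sg) :
    (comp F G).T = F.T.map (fun x => 2*x) ++
      (G.T.filter (fun k => (G.ell k).isSome)).map (fun x => 2*x+1) := by
  show (renL F).T ++ (renR G).T.filter (fun v => ((renR G).ell v).isSome) = _
  rw [renL_T, renR_T]
  congr 1
  exact filter_map_congr' fun k _ => by rw [renR_ell]; simp

theorem comp_S (F G : LinHyp Sg) :
    (comp F G).S = (F.S.filter (fun k => (F.r k).isSome)).map (fun x => 2*x) ++
      G.S.map (fun x => 2*x+1) := by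
  show (renL F).S.filter (fun v => ((renL F).r v).isSome) ++ (renR G).S = _
  rw [renL_S, renR_S]
  congr 1
  exact filter_map_congr' fun k _ => by rw [renL_r]; simp

theorem comp_E (F G : LinHyp Sg) :
    (comp F G).E = F.E.image (fun x => 2*x) ∪ G.E.image (fun x => 2*x+1) := rfl

theorem comp_ell_even (F G : LinHyp Sg) {k : ℕ} (hk : k ∈ F.T) :
    (comp F G).ell (2*k) = (F.ell k).map (fun x => 2*x) := by
  show (if 2*k ∈ (renL F).T then (renL F).ell (2*k) else (renR G).ell (2*k)) = _
  rw [if_pos (by rw [renL_T]; exact memD0.mpr hk), renL_ell]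

theorem comp_ell_odd (F G : LinHyp Sg) (k : ℕ) :
    (comp F G).ell (2*k+1) = (G.ell k).map (fun x => 2*x+1) := by
  show (if 2*k+1 ∈ (renL F).T then (renL F).ell (2*k+1) else (renR G).ell (2*k+1)) = _
  rw [if_neg (by rw [renL_T]; exact not_memD0), renR_ell]

theorem comp_r_even (F G : LinHyp Sg) (k : ℕ) :
    (comp F G).r (2*k) = (F.r k).map (fun x => 2*x) := by
  show (if 2*k ∈ (renR G).S then (renR G).r (2*k) else (renL F).r (2*k)) = _
  rw [if_neg (by rw [renR_S]; exact not_memD1), renL_r]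

theorem comp_r_odd (F G : LinHyp Sg) {k : ℕ} (hk : k ∈ G.S) :
    (comp F G).r (2*k+1) = (G.r k).map (fun x => 2*x+1) := by
  show (if 2*k+1 ∈ (renR G).S then (renR G).r (2*k+1) else (renL F).r (2*k+1)) = _
  rw [if_pos (by rw [renR_S]; exact memD1.mpr hk), renR_r]

theorem comp_lab_even (F G : LinHyp Sg) {a : ℕ} (ha : a ∈ F.E) :
    (comp F G).lab (2*a) = F.lab a := by
  show (if 2*a ∈ (renL F).E then (renL F).lab (2*a) else (renR G).lab (2*a)) = _
  rw [if_pos (by rw [renL_E]; exact fmemD0.mpr ha), renL_lab]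

theorem comp_lab_odd (F G : LinHyp Sg) (a : ℕ) :
    (comp F G).lab (2*a+1) = G.lab a := by
  show (if 2*a+1 ∈ (renL F).E then (renL F).lab (2*a+1) else (renR G).lab (2*a+1)) = _
  rw [if_neg (by rw [renL_E]; exact not_fmemD0), renR_lab]

theorem comp_conn_odd (F G : LinHyp Sg) (k : ℕ) :
    (comp F G).conn (2*k+1) = 2 * G.conn k + 1 := by
  show (if 2*k+1 ∈ (renL F).T then _ else (renR G).conn (2*k+1)) = _
  rw [if_neg (by rw [renL_T]; exact not_memD0), renR_conn]

theorem comp_conn_even_some (F G : LinHyp Sg) {k : ℕ} (hk : k ∈ F.T)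
    (h : (F.r (F.conn k)).isSome) :
    (comp F G).conn (2*k) = 2 * F.conn k := by
  show (if 2*k ∈ (renL F).T then
      (if ((renL F).r ((renL F).conn (2*k))).isSome then (renL F).conn (2*k)
       else (renR G).conn ((renR G).inputs.getD ((renL F).outputs.idxOf ((renL F).conn (2*k))) 0))
    else (renR G).conn (2*k)) = _
  rw [if_pos (by rw [renL_T]; exact memD0.mpr hk), renL_conn,
    if_pos (by rw [renL_r]; simpa using h)]

theorem comp_conn_even_none (F G : LinHyp Sg) {k : ℕ} (hk : k ∈ F.T)
    (h : F.r (F.conn k) = none)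
    (hlen : F.outputs.idxOf (F.conn k) < G.inputs.length) :
    (comp F G).conn (2*k) = 2 * G.conn (G.inputs.getD (F.outputs.idxOf (F.conn k)) 0) + 1 := by
  show (if 2*k ∈ (renL F).T then
      (if ((renL F).r ((renL F).conn (2*k))).isSome then (renL F).conn (2*k)
       else (renR G).conn ((renR G).inputs.getD ((renL F).outputs.idxOf ((renL F).conn (2*k))) 0))
    else (renR G).conn (2*k)) = _
  rw [if_pos (by rw [renL_T]; exact memD0.mpr hk), renL_conn,
    if_neg (by rw [renL_r, h]; simp), renL_outputs, renR_inputs,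
    indexOf_map' (fun x y h => by omega),
    getD_map' (d' := 0) hlen, renR_conn]

theorem comp_inputs (F G : LinHyp Sg) :
    (comp F G).inputs = F.inputs.map (fun x => 2*x) := by
  unfold inputs
  rw [comp_T, List.filter_append]
  have h2 : ((G.T.filter (fun k => (G.ell k).isSome)).map (fun x => 2*x+1)).filter
      (fun v => (comp F G).ell v = none) = [] := by
    apply filter_map_nil'
    intro k hk
    rw [comp_ell_odd]
    have := (List.mem_filter.mp hk).2
    simp only [Option.map_eq_none_iff, decide_eq_false_iff_not]
    intro hnone
    rw [hnone] at this
    simp at this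
  rw [h2, List.append_nil]
  exact filter_map_congr' fun k hk => by
    rw [comp_ell_even F G hk]; simp [Option.map_eq_none_iff]

theorem comp_outputs (F G : LinHyp Sg) :
    (comp F G).outputs = G.outputs.map (fun x => 2*x+1) := by
  unfold outputs
  rw [comp_S, List.filter_append]
  have h1 : ((F.S.filter (fun k => (F.r k).isSome)).map (fun x => 2*x)).filter
      (fun v => (comp F G).r v = none) = [] := by
    apply filter_map_nil'
    intro k hk
    rw [comp_r_even]
    have := (List.mem_filter.mp hk).2
    simp only [Option.map_eq_none_iff, decide_eq_false_iff_not]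
    intro hnone
    rw [hnone] at this
    simp at this
  rw [h1, List.nil_append]
  exact filter_map_congr' fun k hk => by
    rw [comp_r_odd F G hk]; simp [Option.map_eq_none_iff]

theorem comp_sourcesOf_even (F G : LinHyp Sg) (a : ℕ) :
    (comp F G).sourcesOf (2*a) = (F.sourcesOf a).map (fun x => 2*x) := by
  unfold sourcesOf
  rw [comp_S, List.filter_append]
  have h2 : (G.S.map (fun x => 2*x+1)).filter (fun v => (comp F G).r v = some (2*a)) = [] := by
    apply filter_map_nil'
    intro k hk
    rw [comp_r_odd F G hk]
    simpa using mapD1_ne_even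
  rw [h2, List.append_nil]
  rw [filter_map_congr' (q := fun k => decide (F.r k = some a))
    (fun k _ => by rw [comp_r_even]; simp [mapD0_eq_some]), List.filter_filter]
  congr 1
  apply List.filter_congr
  intro k _
  cases h : F.r k <;> simp [h]

theorem comp_sourcesOf_odd (F G : LinHyp Sg) (a : ℕ) :
    (comp F G).sourcesOf (2*a+1) = (G.sourcesOf a).map (fun x => 2*x+1) := by
  unfold sourcesOf
  rw [comp_S, List.filter_append]
  have h1 : ((F.S.filter (fun k => (F.r k).isSome)).map (fun x => 2*x)).filter
      (fun v => (comp F G).r v = some (2*a+1)) = [] := by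
    apply filter_map_nil'
    intro k _
    rw [comp_r_even]
    simpa using mapD0_ne_odd
  rw [h1, List.nil_append]
  exact filter_map_congr' fun k hk => by
    rw [comp_r_odd F G hk]
    simp [mapD1_eq_some]

theorem comp_targetsOf_even (F G : LinHyp Sg) (a : ℕ) :
    (comp F G).targetsOf (2*a) = (F.targetsOf a).map (fun x => 2*x) := by
  unfold targetsOf
  rw [comp_T, List.filter_append]
  have h2 : ((G.T.filter (fun k => (G.ell k).isSome)).map (fun x => 2*x+1)).filter
      (fun v => (comp F G).ell v = some (2*a)) = [] := by
    apply filter_map_nil'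
    intro k _
    rw [comp_ell_odd]
    simpa using mapD1_ne_even
  rw [h2, List.append_nil]
  exact filter_map_congr' fun k hk => by
    rw [comp_ell_even F G hk]
    simp [mapD0_eq_some]

theorem comp_targetsOf_odd (F G : LinHyp Sg) (a : ℕ) :
    (comp F G).targetsOf (2*a+1) = (G.targetsOf a).map (fun x => 2*x+1) := by
  unfold targetsOf
  rw [comp_T, List.filter_append]
  have h1 : (F.T.map (fun x => 2*x)).filter (fun v => (comp F G).ell v = some (2*a+1)) = [] := by
    apply filter_map_nil'
    intro k hk
    rw [comp_ell_even F G hk]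
    simpa using mapD0_ne_odd
  rw [h1, List.nil_append]
  rw [filter_map_congr' (q := fun k => decide (G.ell k = some a))
    (fun k _ => by rw [comp_ell_odd]; simp [mapD1_eq_some]), List.filter_filter]
  congr 1
  apply List.filter_congr
  intro k _
  cases h : G.ell k <;> simp [h]

end LinHyp

end Paper
namespace Paper

namespace LinHyp

/-- The atom bijection swapping residues 1 and 2 mod 4. -/
def phi (v : ℕ) : ℕ := if v % 4 = 1 then v + 1 else if v % 4 = 2 then v - 1 else v

theorem phi00 (k : ℕ) : phi (2*(2*k)) = 2*(2*k) := by unfold phi; split_ifs <;> omega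
theorem phi10 (k : ℕ) : phi (2*(2*k)+1) = 2*(2*k+1) := by unfold phi; split_ifs <;> omega
theorem phi01 (k : ℕ) : phi (2*(2*k+1)) = 2*(2*k)+1 := by unfold phi; split_ifs <;> omega
theorem phi11 (k : ℕ) : phi (2*(2*k+1)+1) = 2*(2*k+1)+1 := by unfold phi; split_ifs <;> omega

theorem injD0 (x y : ℕ) (h : 2*x = 2*y) : x = y := by omega
theorem injD1 (x y : ℕ) (h : 2*x+1 = 2*y+1) : x = y := by omega

theorem phi_inj (a b : ℕ) (h : phi a = phi b) : a = b := by
  unfold phi at h; split_ifs at h <;> omega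

theorem map_phi00 (l : List ℕ) :
    ((l.map (fun x => 2*x)).map (fun x => 2*x)).map phi
      = (l.map (fun x => 2*x)).map (fun x => 2*x) := by
  simp only [List.map_map]
  exact List.map_congr_left fun a _ => phi00 a

theorem map_phi10 (l : List ℕ) :
    ((l.map (fun x => 2*x)).map (fun x => 2*x+1)).map phi
      = (l.map (fun x => 2*x+1)).map (fun x => 2*x) := by
  simp only [List.map_map]
  exact List.map_congr_left fun a _ => phi10 a

theorem map_phi01 (l : List ℕ) :
    ((l.map (fun x => 2*x+1)).map (fun x => 2*x)).map phi
      = (l.map (fun x => 2*x)).map (fun x => 2*x+1) := by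
  simp only [List.map_map]
  exact List.map_congr_left fun a _ => phi01 a

theorem map_phi11 (l : List ℕ) :
    ((l.map (fun x => 2*x+1)).map (fun x => 2*x+1)).map phi
      = (l.map (fun x => 2*x+1)).map (fun x => 2*x+1) := by
  simp only [List.map_map]
  exact List.map_congr_left fun a _ => phi11 a

theorem omap_phi00 (o : Option ℕ) :
    ((o.map (fun x => 2*x)).map (fun x => 2*x)).map phi
      = (o.map (fun x => 2*x)).map (fun x => 2*x) := by
  cases o <;> simp [phi00]

theorem omap_phi10 (o : Option ℕ) :
    ((o.map (fun x => 2*x)).map (fun x => 2*x+1)).map phi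
      = (o.map (fun x => 2*x+1)).map (fun x => 2*x) := by
  cases o <;> simp [phi10]

theorem omap_phi01 (o : Option ℕ) :
    ((o.map (fun x => 2*x+1)).map (fun x => 2*x)).map phi
      = (o.map (fun x => 2*x)).map (fun x => 2*x+1) := by
  cases o <;> simp [phi01]

theorem omap_phi11 (o : Option ℕ) :
    ((o.map (fun x => 2*x+1)).map (fun x => 2*x+1)).map phi
      = (o.map (fun x => 2*x+1)).map (fun x => 2*x+1) := by
  cases o <;> simp [phi11]

end LinHyp

end Paper
namespace Paper

namespace LinHyp

variable {Sg : Sig}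

theorem idH_T (n : ℕ) : (idH Sg n).T = (List.range n).map (fun i => 2*i) := rfl
theorem idH_S (n : ℕ) : (idH Sg n).S = (List.range n).map (fun i => 2*i+1) := rfl
theorem idH_ell (n v : ℕ) : (idH Sg n).ell v = none := rfl
theorem idH_r (n v : ℕ) : (idH Sg n).r v = none := rfl
theorem idH_conn (n v : ℕ) : (idH Sg n).conn v = v + 1 := rfl
theorem idH_E (n : ℕ) : (idH Sg n).E = ∅ := rfl

theorem idH_inputs (n : ℕ) : (idH Sg n).inputs = (idH Sg n).T := by
  unfold inputs; simp [idH_ell]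

theorem idH_outputs (n : ℕ) : (idH Sg n).outputs = (idH Sg n).S := by
  unfold outputs; simp [idH_r]

theorem tensor_id_iso (Sg : Sig) (m n : ℕ) :
    Isom (tensor (idH Sg m) (idH Sg n)) (idH Sg (m + n)) := by
  have hT : (tensor (idH Sg m) (idH Sg n)).T
      = ((List.range m).map (fun i => 2*i)).map (fun x => 2*x)
        ++ ((List.range n).map (fun i => 2*i)).map (fun x => 2*x+1) := by
    rw [tensor_T]; rfl
  have hS : (tensor (idH Sg m) (idH Sg n)).S
      = ((List.range m).map (fun i => 2*i+1)).map (fun x => 2*x)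
        ++ ((List.range n).map (fun i => 2*i+1)).map (fun x => 2*x+1) := by
    rw [tensor_S]; rfl
  have hE : (tensor (idH Sg m) (idH Sg n)).E = ∅ := by
    rw [tensor_E, idH_E, idH_E]; simp
  have memT : ∀ v ∈ (tensor (idH Sg m) (idH Sg n)).T,
      (∃ i, i < m ∧ v = 2*(2*i)) ∨ (∃ i, i < n ∧ v = 2*(2*i)+1) := by
    intro v hv; rw [hT] at hv
    rcases List.mem_append.mp hv with h | h
    · obtain ⟨x, hx, rfl⟩ := List.mem_map.mp h
      obtain ⟨i, hi, rfl⟩ := List.mem_map.mp hx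
      exact Or.inl ⟨i, List.mem_range.mp hi, rfl⟩
    · obtain ⟨x, hx, rfl⟩ := List.mem_map.mp h
      obtain ⟨i, hi, rfl⟩ := List.mem_map.mp hx
      exact Or.inr ⟨i, List.mem_range.mp hi, rfl⟩
  have memS : ∀ v ∈ (tensor (idH Sg m) (idH Sg n)).S,
      (∃ i, i < m ∧ v = 2*(2*i+1)) ∨ (∃ i, i < n ∧ v = 2*(2*i+1)+1) := by
    intro v hv; rw [hS] at hv
    rcases List.mem_append.mp hv with h | h
    · obtain ⟨x, hx, rfl⟩ := List.mem_map.mp h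
      obtain ⟨i, hi, rfl⟩ := List.mem_map.mp hx
      exact Or.inl ⟨i, List.mem_range.mp hi, rfl⟩
    · obtain ⟨x, hx, rfl⟩ := List.mem_map.mp h
      obtain ⟨i, hi, rfl⟩ := List.mem_map.mp hx
      exact Or.inr ⟨i, List.mem_range.mp hi, rfl⟩
  have memTid : ∀ j, j < m + n → 2*j ∈ (idH Sg (m+n)).T := by
    intro j hj
    rw [idH_T]
    exact List.mem_map.mpr ⟨j, List.mem_range.mpr hj, rfl⟩
  have memSid : ∀ j, j < m + n → 2*j+1 ∈ (idH Sg (m+n)).S := by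
    intro j hj
    rw [idH_S]
    exact List.mem_map.mpr ⟨j, List.mem_range.mpr hj, rfl⟩
  have hmemT : ∀ v ∈ (tensor (idH Sg m) (idH Sg n)).T,
      (if v % 4 = 0 then v / 2 else 2*m + v / 2) ∈ (idH Sg (m+n)).T := by
    intro v hv
    rcases memT v hv with ⟨i, hi, rfl⟩ | ⟨i, hi, rfl⟩
    · rw [if_pos (show (2*(2*i)) % 4 = 0 by omega),
        (show 2*(2*i)/2 = 2*i by omega)]
      exact memTid i (by omega)
    · rw [if_neg (show ¬ (2*(2*i)+1) % 4 = 0 by omega),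
        (show 2*m + (2*(2*i)+1)/2 = 2*(m+i) by omega)]
      exact memTid (m+i) (by omega)
  have hmemS : ∀ v ∈ (tensor (idH Sg m) (idH Sg n)).S,
      (if v % 4 = 2 then v / 2 else 2*m + v / 2) ∈ (idH Sg (m+n)).S := by
    intro v hv
    rcases memS v hv with ⟨i, hi, rfl⟩ | ⟨i, hi, rfl⟩
    · rw [if_pos (show (2*(2*i+1)) % 4 = 2 by omega),
        (show 2*(2*i+1)/2 = 2*i+1 by omega)]
      exact memSid i (by omega)
    · rw [if_neg (show ¬ (2*(2*i+1)+1) % 4 = 2 by omega),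
        (show 2*m + (2*(2*i+1)+1)/2 = 2*(m+i)+1 by omega)]
      exact memSid (m+i) (by omega)
  have hconn : ∀ v ∈ (tensor (idH Sg m) (idH Sg n)).T,
      (if ((tensor (idH Sg m) (idH Sg n)).conn v) % 4 = 2
        then ((tensor (idH Sg m) (idH Sg n)).conn v) / 2
        else 2*m + ((tensor (idH Sg m) (idH Sg n)).conn v) / 2)
      = (idH Sg (m+n)).conn (if v % 4 = 0 then v / 2 else 2*m + v / 2) := by
    intro v hv
    rcases memT v hv with ⟨i, hi, rfl⟩ | ⟨i, hi, rfl⟩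
    · rw [tensor_conn_even _ _ (show 2*i ∈ (idH Sg m).T from
        List.mem_map.mpr ⟨i, List.mem_range.mpr hi, rfl⟩), idH_conn, idH_conn]
      split_ifs <;> omega
    · rw [tensor_conn_odd, idH_conn, idH_conn]
      split_ifs <;> omega
  have hinput : (tensor (idH Sg m) (idH Sg n)).inputs.map
      (fun v => if v % 4 = 0 then v / 2 else 2*m + v / 2) = (idH Sg (m+n)).inputs := by
    rw [tensor_inputs, idH_inputs, idH_inputs, idH_inputs, idH_T, idH_T, idH_T,
      List.range_add, List.map_append, List.map_append]
    congr 1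
    · rw [List.map_map, List.map_map]
      exact List.map_congr_left fun a _ => by
        show (if (2*(2*a)) % 4 = 0 then 2*(2*a)/2 else 2*m + 2*(2*a)/2) = 2*a
        split_ifs <;> omega
    · rw [List.map_map, List.map_map, List.map_map]
      exact List.map_congr_left fun a _ => by
        show (if (2*(2*a)+1) % 4 = 0 then (2*(2*a)+1)/2 else 2*m + (2*(2*a)+1)/2) = 2*(m+a)
        split_ifs <;> omega
  have houtput : (tensor (idH Sg m) (idH Sg n)).outputs.map
      (fun v => if v % 4 = 2 then v / 2 else 2*m + v / 2) = (idH Sg (m+n)).outputs := by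
    rw [tensor_outputs, idH_outputs, idH_outputs, idH_outputs, idH_S, idH_S, idH_S,
      List.range_add, List.map_append, List.map_append]
    congr 1
    · rw [List.map_map, List.map_map]
      exact List.map_congr_left fun a _ => by
        show (if (2*(2*a+1)) % 4 = 2 then 2*(2*a+1)/2 else 2*m + 2*(2*a+1)/2) = 2*a+1
        split_ifs <;> omega
    · rw [List.map_map, List.map_map, List.map_map]
      exact List.map_congr_left fun a _ => by
        show (if (2*(2*a+1)+1) % 4 = 2 then (2*(2*a+1)+1)/2 else 2*m + (2*(2*a+1)+1)/2)
          = 2*(m+a)+1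
        split_ifs <;> omega
  exact ⟨{
    hT := fun v => if v % 4 = 0 then v / 2 else 2*m + v / 2
    hS := fun v => if v % 4 = 2 then v / 2 else 2*m + v / 2
    hE := id
    memT := hmemT
    memS := hmemS
    memE := fun e he => absurd (hE ▸ he) (Finset.notMem_empty e)
    ell_comm := by
      intro v hv
      rcases memT v hv with ⟨i, hi, rfl⟩ | ⟨i, hi, rfl⟩
      · rw [idH_ell, tensor_ell_even _ _ (show 2*i ∈ (idH Sg m).T from
          List.mem_map.mpr ⟨i, List.mem_range.mpr hi, rfl⟩), idH_ell]
        rfl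
      · rw [idH_ell, tensor_ell_odd, idH_ell]
        rfl
    r_comm := by
      intro v hv
      rcases memS v hv with ⟨i, hi, rfl⟩ | ⟨i, hi, rfl⟩
      · rw [idH_r, tensor_r_even _ _ (show 2*i+1 ∈ (idH Sg m).S from
          List.mem_map.mpr ⟨i, List.mem_range.mpr hi, rfl⟩), idH_r]
        rfl
      · rw [idH_r, tensor_r_odd, idH_r]
        rfl
    conn_comm := hconn
    lab_comm := fun e he => absurd (hE ▸ he) (Finset.notMem_empty e)
    src_ord := fun e he => absurd (hE ▸ he) (Finset.notMem_empty e)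
    tgt_ord := fun e he => absurd (hE ▸ he) (Finset.notMem_empty e)
    injT := by
      intro v₁ h₁ v₂ h₂ h
      rcases memT v₁ h₁ with ⟨i, hi, rfl⟩ | ⟨i, hi, rfl⟩ <;>
        rcases memT v₂ h₂ with ⟨i', hi', rfl⟩ | ⟨i', hi', rfl⟩ <;>
        split_ifs at h <;> omega
    surjT := by
      intro w hw
      rw [idH_T] at hw
      obtain ⟨j, hj, rfl⟩ := List.mem_map.mp hw
      have hj' := List.mem_range.mp hj
      by_cases hjm : j < m
      · refine ⟨2*(2*j), ?_, ?_⟩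
        · rw [hT]
          exact List.mem_append.mpr (Or.inl (List.mem_map.mpr
            ⟨2*j, List.mem_map.mpr ⟨j, List.mem_range.mpr hjm, rfl⟩, rfl⟩))
        · split_ifs <;> omega
      · refine ⟨2*(2*(j-m))+1, ?_, ?_⟩
        · rw [hT]
          exact List.mem_append.mpr (Or.inr (List.mem_map.mpr
            ⟨2*(j-m), List.mem_map.mpr ⟨j-m, List.mem_range.mpr (by omega), rfl⟩, rfl⟩))
        · split_ifs <;> omega
    injS := by
      intro v₁ h₁ v₂ h₂ h
      rcases memS v₁ h₁ with ⟨i, hi, rfl⟩ | ⟨i, hi, rfl⟩ <;>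
        rcases memS v₂ h₂ with ⟨i', hi', rfl⟩ | ⟨i', hi', rfl⟩ <;>
        split_ifs at h <;> omega
    surjS := by
      intro w hw
      rw [idH_S] at hw
      obtain ⟨j, hj, rfl⟩ := List.mem_map.mp hw
      have hj' := List.mem_range.mp hj
      by_cases hjm : j < m
      · refine ⟨2*(2*j+1), ?_, ?_⟩
        · rw [hS]
          exact List.mem_append.mpr (Or.inl (List.mem_map.mpr
            ⟨2*j+1, List.mem_map.mpr ⟨j, List.mem_range.mpr hjm, rfl⟩, rfl⟩))
        · split_ifs <;> omega
      · refine ⟨2*(2*(j-m)+1)+1, ?_, ?_⟩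
        · rw [hS]
          exact List.mem_append.mpr (Or.inr (List.mem_map.mpr
            ⟨2*(j-m)+1, List.mem_map.mpr ⟨j-m, List.mem_range.mpr (by omega), rfl⟩, rfl⟩))
        · split_ifs <;> omega
    injE := fun e₁ h₁ e₂ h₂ h => absurd (hE ▸ h₁) (Finset.notMem_empty e₁)
    surjE := fun e' he' => absurd ((idH_E (Sg := Sg) (m+n)) ▸ he') (Finset.notMem_empty e')
    inputs_ord := hinput
    outputs_ord := houtput
  }⟩

end LinHyp

end Paper
namespace Paper

namespace LinHyp

variable {Sg : Sig}

theorem comp_tensor_iso (F G H K : LinHyp Sg) (wF : F.WF) (wG : G.WF)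
    (hFH : F.outputs.length = H.inputs.length)
    (hGK : G.outputs.length = K.inputs.length) :
    Isom (comp (tensor F G) (tensor H K)) (tensor (comp F H) (comp G K)) := by
  -- normal forms of the carrier lists
  have hfHK : (tensor H K).T.filter (fun k => ((tensor H K).ell k).isSome)
      = (H.T.filter (fun k => (H.ell k).isSome)).map (fun x => 2*x)
        ++ (K.T.filter (fun k => (K.ell k).isSome)).map (fun x => 2*x+1) := by
    rw [tensor_T, List.filter_append]
    congr 1
    · exact filter_map_congr' fun k hk => by rw [tensor_ell_even H K hk]; simp
    · exact filter_map_congr' fun k _ => by rw [tensor_ell_odd]; simp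
  have hfFG : (tensor F G).S.filter (fun k => ((tensor F G).r k).isSome)
      = (F.S.filter (fun k => (F.r k).isSome)).map (fun x => 2*x)
        ++ (G.S.filter (fun k => (G.r k).isSome)).map (fun x => 2*x+1) := by
    rw [tensor_S, List.filter_append]
    congr 1
    · exact filter_map_congr' fun k hk => by rw [tensor_r_even F G hk]; simp
    · exact filter_map_congr' fun k _ => by rw [tensor_r_odd]; simp
  have hAT : (comp (tensor F G) (tensor H K)).T
      = (F.T.map (fun x => 2*x)).map (fun x => 2*x)
        ++ (G.T.map (fun x => 2*x+1)).map (fun x => 2*x)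
        ++ (((H.T.filter (fun k => (H.ell k).isSome)).map (fun x => 2*x)).map (fun x => 2*x+1)
        ++ ((K.T.filter (fun k => (K.ell k).isSome)).map (fun x => 2*x+1)).map (fun x => 2*x+1)) := by
    rw [comp_T, hfHK, tensor_T, List.map_append, List.map_append]
  have hBT : (tensor (comp F H) (comp G K)).T
      = ((F.T.map (fun x => 2*x)).map (fun x => 2*x)
        ++ ((H.T.filter (fun k => (H.ell k).isSome)).map (fun x => 2*x+1)).map (fun x => 2*x))
        ++ ((G.T.map (fun x => 2*x)).map (fun x => 2*x+1)
        ++ ((K.T.filter (fun k => (K.ell k).isSome)).map (fun x => 2*x+1)).map (fun x => 2*x+1)) := by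
    rw [tensor_T, comp_T, comp_T, List.map_append, List.map_append]
  have hAS : (comp (tensor F G) (tensor H K)).S
      = ((F.S.filter (fun k => (F.r k).isSome)).map (fun x => 2*x)).map (fun x => 2*x)
        ++ ((G.S.filter (fun k => (G.r k).isSome)).map (fun x => 2*x+1)).map (fun x => 2*x)
        ++ ((H.S.map (fun x => 2*x)).map (fun x => 2*x+1)
        ++ (K.S.map (fun x => 2*x+1)).map (fun x => 2*x+1)) := by
    rw [comp_S, hfFG, tensor_S, List.map_append, List.map_append]
  have hBS : (tensor (comp F H) (comp G K)).S
      = (((F.S.filter (fun k => (F.r k).isSome)).map (fun x => 2*x)).map (fun x => 2*x)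
        ++ (H.S.map (fun x => 2*x+1)).map (fun x => 2*x))
        ++ (((G.S.filter (fun k => (G.r k).isSome)).map (fun x => 2*x)).map (fun x => 2*x+1)
        ++ (K.S.map (fun x => 2*x+1)).map (fun x => 2*x+1)) := by
    rw [tensor_S, comp_S, comp_S, List.map_append, List.map_append]
  have hAE : (comp (tensor F G) (tensor H K)).E
      = ((F.E.image (fun x => 2*x)).image (fun x => 2*x)
        ∪ (G.E.image (fun x => 2*x+1)).image (fun x => 2*x))
        ∪ (((H.E.image (fun x => 2*x)).image (fun x => 2*x+1))
        ∪ ((K.E.image (fun x => 2*x+1)).image (fun x => 2*x+1))) := by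
    rw [comp_E, tensor_E, tensor_E, Finset.image_union, Finset.image_union]
  have hBE : (tensor (comp F H) (comp G K)).E
      = ((F.E.image (fun x => 2*x)).image (fun x => 2*x)
        ∪ (H.E.image (fun x => 2*x+1)).image (fun x => 2*x))
        ∪ (((G.E.image (fun x => 2*x)).image (fun x => 2*x+1))
        ∪ ((K.E.image (fun x => 2*x+1)).image (fun x => 2*x+1))) := by
    rw [tensor_E, comp_E, comp_E, Finset.image_union, Finset.image_union]
  -- membership characterisations
  have memAT : ∀ v, v ∈ (comp (tensor F G) (tensor H K)).T ↔
      ((∃ k, k ∈ F.T ∧ v = 2*(2*k)) ∨ (∃ k, k ∈ G.T ∧ v = 2*(2*k+1)) ∨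
       (∃ k, (k ∈ H.T ∧ (H.ell k).isSome) ∧ v = 2*(2*k)+1) ∨
       (∃ k, (k ∈ K.T ∧ (K.ell k).isSome) ∧ v = 2*(2*k+1)+1)) := by
    intro v
    rw [hAT]
    constructor
    · intro hv
      rcases List.mem_append.mp hv with h | h
      · rcases List.mem_append.mp h with h | h
        · obtain ⟨x, hx, rfl⟩ := List.mem_map.mp h
          obtain ⟨k, hk, rfl⟩ := List.mem_map.mp hx
          exact Or.inl ⟨k, hk, rfl⟩
        · obtain ⟨x, hx, rfl⟩ := List.mem_map.mp h
          obtain ⟨k, hk, rfl⟩ := List.mem_map.mp hx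
          exact Or.inr (Or.inl ⟨k, hk, rfl⟩)
      · rcases List.mem_append.mp h with h | h
        · obtain ⟨x, hx, rfl⟩ := List.mem_map.mp h
          obtain ⟨k, hk, rfl⟩ := List.mem_map.mp hx
          exact Or.inr (Or.inr (Or.inl ⟨k, List.mem_filter.mp hk, rfl⟩))
        · obtain ⟨x, hx, rfl⟩ := List.mem_map.mp h
          obtain ⟨k, hk, rfl⟩ := List.mem_map.mp hx
          exact Or.inr (Or.inr (Or.inr ⟨k, List.mem_filter.mp hk, rfl⟩))
    · rintro (⟨k, hk, rfl⟩ | ⟨k, hk, rfl⟩ | ⟨k, hk, rfl⟩ | ⟨k, hk, rfl⟩)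
      · exact List.mem_append.mpr (Or.inl (List.mem_append.mpr (Or.inl
          (List.mem_map.mpr ⟨2*k, List.mem_map.mpr ⟨k, hk, rfl⟩, rfl⟩))))
      · exact List.mem_append.mpr (Or.inl (List.mem_append.mpr (Or.inr
          (List.mem_map.mpr ⟨2*k+1, List.mem_map.mpr ⟨k, hk, rfl⟩, rfl⟩))))
      · exact List.mem_append.mpr (Or.inr (List.mem_append.mpr (Or.inl
          (List.mem_map.mpr ⟨2*k, List.mem_map.mpr ⟨k, List.mem_filter.mpr hk, rfl⟩, rfl⟩))))
      · exact List.mem_append.mpr (Or.inr (List.mem_append.mpr (Or.inr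
          (List.mem_map.mpr ⟨2*k+1, List.mem_map.mpr ⟨k, List.mem_filter.mpr hk, rfl⟩, rfl⟩))))
  have memBT : ∀ v, v ∈ (tensor (comp F H) (comp G K)).T ↔
      ((∃ k, k ∈ F.T ∧ v = 2*(2*k)) ∨
       (∃ k, (k ∈ H.T ∧ (H.ell k).isSome) ∧ v = 2*(2*k+1)) ∨
       (∃ k, k ∈ G.T ∧ v = 2*(2*k)+1) ∨
       (∃ k, (k ∈ K.T ∧ (K.ell k).isSome) ∧ v = 2*(2*k+1)+1)) := by
    intro v
    rw [hBT]
    constructor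
    · intro hv
      rcases List.mem_append.mp hv with h | h
      · rcases List.mem_append.mp h with h | h
        · obtain ⟨x, hx, rfl⟩ := List.mem_map.mp h
          obtain ⟨k, hk, rfl⟩ := List.mem_map.mp hx
          exact Or.inl ⟨k, hk, rfl⟩
        · obtain ⟨x, hx, rfl⟩ := List.mem_map.mp h
          obtain ⟨k, hk, rfl⟩ := List.mem_map.mp hx
          exact Or.inr (Or.inl ⟨k, List.mem_filter.mp hk, rfl⟩)
      · rcases List.mem_append.mp h with h | h
        · obtain ⟨x, hx, rfl⟩ := List.mem_map.mp h
          obtain ⟨k, hk, rfl⟩ := List.mem_map.mp hx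
          exact Or.inr (Or.inr (Or.inl ⟨k, hk, rfl⟩))
        · obtain ⟨x, hx, rfl⟩ := List.mem_map.mp h
          obtain ⟨k, hk, rfl⟩ := List.mem_map.mp hx
          exact Or.inr (Or.inr (Or.inr ⟨k, List.mem_filter.mp hk, rfl⟩))
    · rintro (⟨k, hk, rfl⟩ | ⟨k, hk, rfl⟩ | ⟨k, hk, rfl⟩ | ⟨k, hk, rfl⟩)
      · exact List.mem_append.mpr (Or.inl (List.mem_append.mpr (Or.inl
          (List.mem_map.mpr ⟨2*k, List.mem_map.mpr ⟨k, hk, rfl⟩, rfl⟩))))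
      · exact List.mem_append.mpr (Or.inl (List.mem_append.mpr (Or.inr
          (List.mem_map.mpr ⟨2*k+1, List.mem_map.mpr ⟨k, List.mem_filter.mpr hk, rfl⟩, rfl⟩))))
      · exact List.mem_append.mpr (Or.inr (List.mem_append.mpr (Or.inl
          (List.mem_map.mpr ⟨2*k, List.mem_map.mpr ⟨k, hk, rfl⟩, rfl⟩))))
      · exact List.mem_append.mpr (Or.inr (List.mem_append.mpr (Or.inr
          (List.mem_map.mpr ⟨2*k+1, List.mem_map.mpr ⟨k, List.mem_filter.mpr hk, rfl⟩, rfl⟩))))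
  have memAS : ∀ v, v ∈ (comp (tensor F G) (tensor H K)).S ↔
      ((∃ k, (k ∈ F.S ∧ (F.r k).isSome) ∧ v = 2*(2*k)) ∨
       (∃ k, (k ∈ G.S ∧ (G.r k).isSome) ∧ v = 2*(2*k+1)) ∨
       (∃ k, k ∈ H.S ∧ v = 2*(2*k)+1) ∨
       (∃ k, k ∈ K.S ∧ v = 2*(2*k+1)+1)) := by
    intro v
    rw [hAS]
    constructor
    · intro hv
      rcases List.mem_append.mp hv with h | h
      · rcases List.mem_append.mp h with h | h
        · obtain ⟨x, hx, rfl⟩ := List.mem_map.mp h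
          obtain ⟨k, hk, rfl⟩ := List.mem_map.mp hx
          exact Or.inl ⟨k, List.mem_filter.mp hk, rfl⟩
        · obtain ⟨x, hx, rfl⟩ := List.mem_map.mp h
          obtain ⟨k, hk, rfl⟩ := List.mem_map.mp hx
          exact Or.inr (Or.inl ⟨k, List.mem_filter.mp hk, rfl⟩)
      · rcases List.mem_append.mp h with h | h
        · obtain ⟨x, hx, rfl⟩ := List.mem_map.mp h
          obtain ⟨k, hk, rfl⟩ := List.mem_map.mp hx
          exact Or.inr (Or.inr (Or.inl ⟨k, hk, rfl⟩))
        · obtain ⟨x, hx, rfl⟩ := List.mem_map.mp h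
          obtain ⟨k, hk, rfl⟩ := List.mem_map.mp hx
          exact Or.inr (Or.inr (Or.inr ⟨k, hk, rfl⟩))
    · rintro (⟨k, hk, rfl⟩ | ⟨k, hk, rfl⟩ | ⟨k, hk, rfl⟩ | ⟨k, hk, rfl⟩)
      · exact List.mem_append.mpr (Or.inl (List.mem_append.mpr (Or.inl
          (List.mem_map.mpr ⟨2*k, List.mem_map.mpr ⟨k, List.mem_filter.mpr hk, rfl⟩, rfl⟩))))
      · exact List.mem_append.mpr (Or.inl (List.mem_append.mpr (Or.inr
          (List.mem_map.mpr ⟨2*k+1, List.mem_map.mpr ⟨k, List.mem_filter.mpr hk, rfl⟩, rfl⟩))))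
      · exact List.mem_append.mpr (Or.inr (List.mem_append.mpr (Or.inl
          (List.mem_map.mpr ⟨2*k, List.mem_map.mpr ⟨k, hk, rfl⟩, rfl⟩))))
      · exact List.mem_append.mpr (Or.inr (List.mem_append.mpr (Or.inr
          (List.mem_map.mpr ⟨2*k+1, List.mem_map.mpr ⟨k, hk, rfl⟩, rfl⟩))))
  have memBS : ∀ v, v ∈ (tensor (comp F H) (comp G K)).S ↔
      ((∃ k, (k ∈ F.S ∧ (F.r k).isSome) ∧ v = 2*(2*k)) ∨
       (∃ k, k ∈ H.S ∧ v = 2*(2*k+1)) ∨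
       (∃ k, (k ∈ G.S ∧ (G.r k).isSome) ∧ v = 2*(2*k)+1) ∨
       (∃ k, k ∈ K.S ∧ v = 2*(2*k+1)+1)) := by
    intro v
    rw [hBS]
    constructor
    · intro hv
      rcases List.mem_append.mp hv with h | h
      · rcases List.mem_append.mp h with h | h
        · obtain ⟨x, hx, rfl⟩ := List.mem_map.mp h
          obtain ⟨k, hk, rfl⟩ := List.mem_map.mp hx
          exact Or.inl ⟨k, List.mem_filter.mp hk, rfl⟩
        · obtain ⟨x, hx, rfl⟩ := List.mem_map.mp h
          obtain ⟨k, hk, rfl⟩ := List.mem_map.mp hx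
          exact Or.inr (Or.inl ⟨k, hk, rfl⟩)
      · rcases List.mem_append.mp h with h | h
        · obtain ⟨x, hx, rfl⟩ := List.mem_map.mp h
          obtain ⟨k, hk, rfl⟩ := List.mem_map.mp hx
          exact Or.inr (Or.inr (Or.inl ⟨k, List.mem_filter.mp hk, rfl⟩))
        · obtain ⟨x, hx, rfl⟩ := List.mem_map.mp h
          obtain ⟨k, hk, rfl⟩ := List.mem_map.mp hx
          exact Or.inr (Or.inr (Or.inr ⟨k, hk, rfl⟩))
    · rintro (⟨k, hk, rfl⟩ | ⟨k, hk, rfl⟩ | ⟨k, hk, rfl⟩ | ⟨k, hk, rfl⟩)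
      · exact List.mem_append.mpr (Or.inl (List.mem_append.mpr (Or.inl
          (List.mem_map.mpr ⟨2*k, List.mem_map.mpr ⟨k, List.mem_filter.mpr hk, rfl⟩, rfl⟩))))
      · exact List.mem_append.mpr (Or.inl (List.mem_append.mpr (Or.inr
          (List.mem_map.mpr ⟨2*k+1, List.mem_map.mpr ⟨k, hk, rfl⟩, rfl⟩))))
      · exact List.mem_append.mpr (Or.inr (List.mem_append.mpr (Or.inl
          (List.mem_map.mpr ⟨2*k, List.mem_map.mpr ⟨k, List.mem_filter.mpr hk, rfl⟩, rfl⟩))))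
      · exact List.mem_append.mpr (Or.inr (List.mem_append.mpr (Or.inr
          (List.mem_map.mpr ⟨2*k+1, List.mem_map.mpr ⟨k, hk, rfl⟩, rfl⟩))))
  have memAE : ∀ e, e ∈ (comp (tensor F G) (tensor H K)).E ↔
      ((∃ a, a ∈ F.E ∧ e = 2*(2*a)) ∨ (∃ a, a ∈ G.E ∧ e = 2*(2*a+1)) ∨
       (∃ a, a ∈ H.E ∧ e = 2*(2*a)+1) ∨ (∃ a, a ∈ K.E ∧ e = 2*(2*a+1)+1)) := by
    intro e
    rw [hAE]
    constructor
    · intro he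
      rcases Finset.mem_union.mp he with h | h
      · rcases Finset.mem_union.mp h with h | h
        · obtain ⟨x, hx, rfl⟩ := Finset.mem_image.mp h
          obtain ⟨a, ha, rfl⟩ := Finset.mem_image.mp hx
          exact Or.inl ⟨a, ha, rfl⟩
        · obtain ⟨x, hx, rfl⟩ := Finset.mem_image.mp h
          obtain ⟨a, ha, rfl⟩ := Finset.mem_image.mp hx
          exact Or.inr (Or.inl ⟨a, ha, rfl⟩)
      · rcases Finset.mem_union.mp h with h | h
        · obtain ⟨x, hx, rfl⟩ := Finset.mem_image.mp h
          obtain ⟨a, ha, rfl⟩ := Finset.mem_image.mp hx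
          exact Or.inr (Or.inr (Or.inl ⟨a, ha, rfl⟩))
        · obtain ⟨x, hx, rfl⟩ := Finset.mem_image.mp h
          obtain ⟨a, ha, rfl⟩ := Finset.mem_image.mp hx
          exact Or.inr (Or.inr (Or.inr ⟨a, ha, rfl⟩))
    · rintro (⟨a, ha, rfl⟩ | ⟨a, ha, rfl⟩ | ⟨a, ha, rfl⟩ | ⟨a, ha, rfl⟩)
      · exact Finset.mem_union.mpr (Or.inl (Finset.mem_union.mpr (Or.inl
          (Finset.mem_image.mpr ⟨2*a, Finset.mem_image.mpr ⟨a, ha, rfl⟩, rfl⟩))))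
      · exact Finset.mem_union.mpr (Or.inl (Finset.mem_union.mpr (Or.inr
          (Finset.mem_image.mpr ⟨2*a+1, Finset.mem_image.mpr ⟨a, ha, rfl⟩, rfl⟩))))
      · exact Finset.mem_union.mpr (Or.inr (Finset.mem_union.mpr (Or.inl
          (Finset.mem_image.mpr ⟨2*a, Finset.mem_image.mpr ⟨a, ha, rfl⟩, rfl⟩))))
      · exact Finset.mem_union.mpr (Or.inr (Finset.mem_union.mpr (Or.inr
          (Finset.mem_image.mpr ⟨2*a+1, Finset.mem_image.mpr ⟨a, ha, rfl⟩, rfl⟩))))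
  have memBE : ∀ e, e ∈ (tensor (comp F H) (comp G K)).E ↔
      ((∃ a, a ∈ F.E ∧ e = 2*(2*a)) ∨ (∃ a, a ∈ H.E ∧ e = 2*(2*a+1)) ∨
       (∃ a, a ∈ G.E ∧ e = 2*(2*a)+1) ∨ (∃ a, a ∈ K.E ∧ e = 2*(2*a+1)+1)) := by
    intro e
    rw [hBE]
    constructor
    · intro he
      rcases Finset.mem_union.mp he with h | h
      · rcases Finset.mem_union.mp h with h | h
        · obtain ⟨x, hx, rfl⟩ := Finset.mem_image.mp h
          obtain ⟨a, ha, rfl⟩ := Finset.mem_image.mp hx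
          exact Or.inl ⟨a, ha, rfl⟩
        · obtain ⟨x, hx, rfl⟩ := Finset.mem_image.mp h
          obtain ⟨a, ha, rfl⟩ := Finset.mem_image.mp hx
          exact Or.inr (Or.inl ⟨a, ha, rfl⟩)
      · rcases Finset.mem_union.mp h with h | h
        · obtain ⟨x, hx, rfl⟩ := Finset.mem_image.mp h
          obtain ⟨a, ha, rfl⟩ := Finset.mem_image.mp hx
          exact Or.inr (Or.inr (Or.inl ⟨a, ha, rfl⟩))
        · obtain ⟨x, hx, rfl⟩ := Finset.mem_image.mp h
          obtain ⟨a, ha, rfl⟩ := Finset.mem_image.mp hx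
          exact Or.inr (Or.inr (Or.inr ⟨a, ha, rfl⟩))
    · rintro (⟨a, ha, rfl⟩ | ⟨a, ha, rfl⟩ | ⟨a, ha, rfl⟩ | ⟨a, ha, rfl⟩)
      · exact Finset.mem_union.mpr (Or.inl (Finset.mem_union.mpr (Or.inl
          (Finset.mem_image.mpr ⟨2*a, Finset.mem_image.mpr ⟨a, ha, rfl⟩, rfl⟩))))
      · exact Finset.mem_union.mpr (Or.inl (Finset.mem_union.mpr (Or.inr
          (Finset.mem_image.mpr ⟨2*a+1, Finset.mem_image.mpr ⟨a, ha, rfl⟩, rfl⟩))))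
      · exact Finset.mem_union.mpr (Or.inr (Finset.mem_union.mpr (Or.inl
          (Finset.mem_image.mpr ⟨2*a, Finset.mem_image.mpr ⟨a, ha, rfl⟩, rfl⟩))))
      · exact Finset.mem_union.mpr (Or.inr (Finset.mem_union.mpr (Or.inr
          (Finset.mem_image.mpr ⟨2*a+1, Finset.mem_image.mpr ⟨a, ha, rfl⟩, rfl⟩))))
  -- small membership helpers
  have mtFG1 : ∀ {k}, k ∈ F.T → 2*k ∈ (tensor F G).T := fun hk => by
    rw [tensor_T]; exact List.mem_append.mpr (Or.inl (memD0.mpr hk))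
  have mtFG2 : ∀ {k}, k ∈ G.T → 2*k+1 ∈ (tensor F G).T := fun hk => by
    rw [tensor_T]; exact List.mem_append.mpr (Or.inr (memD1.mpr hk))
  have mtHK1 : ∀ {k}, k ∈ H.T → 2*k ∈ (tensor H K).T := fun hk => by
    rw [tensor_T]; exact List.mem_append.mpr (Or.inl (memD0.mpr hk))
  have mtFH1 : ∀ {k}, k ∈ F.T → 2*k ∈ (comp F H).T := fun hk => by
    rw [comp_T]; exact List.mem_append.mpr (Or.inl (memD0.mpr hk))
  have mtFH2 : ∀ {k}, k ∈ H.T → (H.ell k).isSome → 2*k+1 ∈ (comp F H).T := fun hk hs => by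
    rw [comp_T]
    exact List.mem_append.mpr (Or.inr (List.mem_map.mpr ⟨_, List.mem_filter.mpr ⟨hk, hs⟩, rfl⟩))
  have mtGK1 : ∀ {k}, k ∈ G.T → 2*k ∈ (comp G K).T := fun hk => by
    rw [comp_T]; exact List.mem_append.mpr (Or.inl (memD0.mpr hk))
  have msFG1 : ∀ {k}, k ∈ F.S → 2*k ∈ (tensor F G).S := fun hk => by
    rw [tensor_S]; exact List.mem_append.mpr (Or.inl (memD0.mpr hk))
  have msHK1 : ∀ {k}, k ∈ H.S → 2*k ∈ (tensor H K).S := fun hk => by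
    rw [tensor_S]; exact List.mem_append.mpr (Or.inl (memD0.mpr hk))
  have msHK2 : ∀ {k}, k ∈ K.S → 2*k+1 ∈ (tensor H K).S := fun hk => by
    rw [tensor_S]; exact List.mem_append.mpr (Or.inr (memD1.mpr hk))
  have msFH1 : ∀ {k}, k ∈ F.S → (F.r k).isSome → 2*k ∈ (comp F H).S := fun hk hs => by
    rw [comp_S]
    exact List.mem_append.mpr (Or.inl (List.mem_map.mpr ⟨_, List.mem_filter.mpr ⟨hk, hs⟩, rfl⟩))
  have msGK1 : ∀ {k}, k ∈ G.S → (G.r k).isSome → 2*k ∈ (comp G K).S := fun hk hs => by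
    rw [comp_S]
    exact List.mem_append.mpr (Or.inl (List.mem_map.mpr ⟨_, List.mem_filter.mpr ⟨hk, hs⟩, rfl⟩))
  -- fields of the isomorphism
  have hmemT : ∀ v ∈ (comp (tensor F G) (tensor H K)).T,
      phi v ∈ (tensor (comp F H) (comp G K)).T := by
    intro v hv
    rcases (memAT v).mp hv with ⟨k, hk, rfl⟩ | ⟨k, hk, rfl⟩ | ⟨k, hk, rfl⟩ | ⟨k, hk, rfl⟩
    · rw [phi00]; exact (memBT _).mpr (Or.inl ⟨k, hk, rfl⟩)
    · rw [phi01]; exact (memBT _).mpr (Or.inr (Or.inr (Or.inl ⟨k, hk, rfl⟩)))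
    · rw [phi10]; exact (memBT _).mpr (Or.inr (Or.inl ⟨k, hk, rfl⟩))
    · rw [phi11]; exact (memBT _).mpr (Or.inr (Or.inr (Or.inr ⟨k, hk, rfl⟩)))
  have hmemS : ∀ v ∈ (comp (tensor F G) (tensor H K)).S,
      phi v ∈ (tensor (comp F H) (comp G K)).S := by
    intro v hv
    rcases (memAS v).mp hv with ⟨k, hk, rfl⟩ | ⟨k, hk, rfl⟩ | ⟨k, hk, rfl⟩ | ⟨k, hk, rfl⟩
    · rw [phi00]; exact (memBS _).mpr (Or.inl ⟨k, hk, rfl⟩)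
    · rw [phi01]; exact (memBS _).mpr (Or.inr (Or.inr (Or.inl ⟨k, hk, rfl⟩)))
    · rw [phi10]; exact (memBS _).mpr (Or.inr (Or.inl ⟨k, hk, rfl⟩))
    · rw [phi11]; exact (memBS _).mpr (Or.inr (Or.inr (Or.inr ⟨k, hk, rfl⟩)))
  have hmemE : ∀ e ∈ (comp (tensor F G) (tensor H K)).E,
      phi e ∈ (tensor (comp F H) (comp G K)).E := by
    intro e he
    rcases (memAE e).mp he with ⟨a, ha, rfl⟩ | ⟨a, ha, rfl⟩ | ⟨a, ha, rfl⟩ | ⟨a, ha, rfl⟩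
    · rw [phi00]; exact (memBE _).mpr (Or.inl ⟨a, ha, rfl⟩)
    · rw [phi01]; exact (memBE _).mpr (Or.inr (Or.inr (Or.inl ⟨a, ha, rfl⟩)))
    · rw [phi10]; exact (memBE _).mpr (Or.inr (Or.inl ⟨a, ha, rfl⟩))
    · rw [phi11]; exact (memBE _).mpr (Or.inr (Or.inr (Or.inr ⟨a, ha, rfl⟩)))
  have hell : ∀ v ∈ (comp (tensor F G) (tensor H K)).T,
      (tensor (comp F H) (comp G K)).ell (phi v)
        = ((comp (tensor F G) (tensor H K)).ell v).map phi := by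
    intro v hv
    rcases (memAT v).mp hv with ⟨k, hk, rfl⟩ | ⟨k, hk, rfl⟩ | ⟨k, ⟨hk, hs⟩, rfl⟩ | ⟨k, ⟨hk, hs⟩, rfl⟩
    · rw [phi00, comp_ell_even _ _ (mtFG1 hk), tensor_ell_even _ _ hk,
        tensor_ell_even _ _ (mtFH1 hk), comp_ell_even _ _ hk]
      exact (omap_phi00 _).symm
    · rw [phi01, comp_ell_even _ _ (mtFG2 hk), tensor_ell_odd,
        tensor_ell_odd, comp_ell_even _ _ hk]
      exact (omap_phi01 _).symm
    · rw [phi10, comp_ell_odd, tensor_ell_even _ _ hk,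
        tensor_ell_even _ _ (mtFH2 hk hs), comp_ell_odd]
      exact (omap_phi10 _).symm
    · rw [phi11, comp_ell_odd, tensor_ell_odd, tensor_ell_odd, comp_ell_odd]
      exact (omap_phi11 _).symm
  have hr : ∀ v ∈ (comp (tensor F G) (tensor H K)).S,
      (tensor (comp F H) (comp G K)).r (phi v)
        = ((comp (tensor F G) (tensor H K)).r v).map phi := by
    intro v hv
    rcases (memAS v).mp hv with ⟨k, ⟨hk, hs⟩, rfl⟩ | ⟨k, ⟨hk, hs⟩, rfl⟩ | ⟨k, hk, rfl⟩ | ⟨k, hk, rfl⟩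
    · rw [phi00, comp_r_even, tensor_r_even _ _ hk,
        tensor_r_even _ _ (msFH1 hk hs), comp_r_even]
      exact (omap_phi00 _).symm
    · rw [phi01, comp_r_even, tensor_r_odd, tensor_r_odd, comp_r_even]
      exact (omap_phi01 _).symm
    · have m2 : 2*k+1 ∈ (comp F H).S := by
        rw [comp_S]; exact List.mem_append.mpr (Or.inr (memD1.mpr hk))
      rw [phi10, comp_r_odd _ _ (msHK1 hk), tensor_r_even _ _ hk,
        tensor_r_even _ _ m2, comp_r_odd _ _ hk]
      exact (omap_phi10 _).symm
    · rw [phi11, comp_r_odd _ _ (msHK2 hk), tensor_r_odd, tensor_r_odd, comp_r_odd _ _ hk]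
      exact (omap_phi11 _).symm
  have hlab : ∀ e ∈ (comp (tensor F G) (tensor H K)).E,
      (tensor (comp F H) (comp G K)).lab (phi e)
        = (comp (tensor F G) (tensor H K)).lab e := by
    intro e he
    rcases (memAE e).mp he with ⟨a, ha, rfl⟩ | ⟨a, ha, rfl⟩ | ⟨a, ha, rfl⟩ | ⟨a, ha, rfl⟩
    · have m1 : 2*a ∈ (tensor F G).E := by
        rw [tensor_E]; exact Finset.mem_union.mpr (Or.inl (fmemD0.mpr ha))
      have m2 : 2*a ∈ (comp F H).E := by
        rw [comp_E]; exact Finset.mem_union.mpr (Or.inl (fmemD0.mpr ha))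
      rw [phi00, comp_lab_even _ _ m1, tensor_lab_even _ _ ha,
        tensor_lab_even _ _ m2, comp_lab_even _ _ ha]
    · have m1 : 2*a+1 ∈ (tensor F G).E := by
        rw [tensor_E]; exact Finset.mem_union.mpr (Or.inr (fmemD1.mpr ha))
      rw [phi01, comp_lab_even _ _ m1, tensor_lab_odd,
        tensor_lab_odd, comp_lab_even _ _ ha]
    · have m2 : 2*a+1 ∈ (comp F H).E := by
        rw [comp_E]; exact Finset.mem_union.mpr (Or.inr (fmemD1.mpr ha))
      rw [phi10, comp_lab_odd, tensor_lab_even _ _ ha,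
        tensor_lab_even _ _ m2, comp_lab_odd]
    · rw [phi11, comp_lab_odd, tensor_lab_odd, tensor_lab_odd, comp_lab_odd]
  have hsrc : ∀ e ∈ (comp (tensor F G) (tensor H K)).E,
      (tensor (comp F H) (comp G K)).sourcesOf (phi e)
        = ((comp (tensor F G) (tensor H K)).sourcesOf e).map phi := by
    intro e he
    rcases (memAE e).mp he with ⟨a, ha, rfl⟩ | ⟨a, ha, rfl⟩ | ⟨a, ha, rfl⟩ | ⟨a, ha, rfl⟩
    · rw [phi00, comp_sourcesOf_even, tensor_sourcesOf_even,
        tensor_sourcesOf_even, comp_sourcesOf_even]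
      exact (map_phi00 _).symm
    · rw [phi01, comp_sourcesOf_even, tensor_sourcesOf_odd,
        tensor_sourcesOf_odd, comp_sourcesOf_even]
      exact (map_phi01 _).symm
    · rw [phi10, comp_sourcesOf_odd, tensor_sourcesOf_even,
        tensor_sourcesOf_even, comp_sourcesOf_odd]
      exact (map_phi10 _).symm
    · rw [phi11, comp_sourcesOf_odd, tensor_sourcesOf_odd,
        tensor_sourcesOf_odd, comp_sourcesOf_odd]
      exact (map_phi11 _).symm
  have htgt : ∀ e ∈ (comp (tensor F G) (tensor H K)).E,
      (tensor (comp F H) (comp G K)).targetsOf (phi e)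
        = ((comp (tensor F G) (tensor H K)).targetsOf e).map phi := by
    intro e he
    rcases (memAE e).mp he with ⟨a, ha, rfl⟩ | ⟨a, ha, rfl⟩ | ⟨a, ha, rfl⟩ | ⟨a, ha, rfl⟩
    · rw [phi00, comp_targetsOf_even, tensor_targetsOf_even,
        tensor_targetsOf_even, comp_targetsOf_even]
      exact (map_phi00 _).symm
    · rw [phi01, comp_targetsOf_even, tensor_targetsOf_odd,
        tensor_targetsOf_odd, comp_targetsOf_even]
      exact (map_phi01 _).symm
    · rw [phi10, comp_targetsOf_odd, tensor_targetsOf_even,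
        tensor_targetsOf_even, comp_targetsOf_odd]
      exact (map_phi10 _).symm
    · rw [phi11, comp_targetsOf_odd, tensor_targetsOf_odd,
        tensor_targetsOf_odd, comp_targetsOf_odd]
      exact (map_phi11 _).symm
  have hinputs : (comp (tensor F G) (tensor H K)).inputs.map phi
      = (tensor (comp F H) (comp G K)).inputs := by
    rw [comp_inputs, tensor_inputs, tensor_inputs, comp_inputs, comp_inputs,
      List.map_append, List.map_append]
    congr 1
    · exact map_phi00 _
    · exact map_phi01 _
  have houtputs : (comp (tensor F G) (tensor H K)).outputs.map phi
      = (tensor (comp F H) (comp G K)).outputs := by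
    rw [comp_outputs, tensor_outputs, tensor_outputs, comp_outputs, comp_outputs,
      List.map_append, List.map_append]
    congr 1
    · exact map_phi10 _
    · exact map_phi11 _
  have hconn : ∀ v ∈ (comp (tensor F G) (tensor H K)).T,
      phi ((comp (tensor F G) (tensor H K)).conn v)
        = (tensor (comp F H) (comp G K)).conn (phi v) := by
    intro v hv
    rcases (memAT v).mp hv with ⟨k, hk, rfl⟩ | ⟨k, hk, rfl⟩ | ⟨k, ⟨hk, hs⟩, rfl⟩ | ⟨k, ⟨hk, hs⟩, rfl⟩
    · -- F block
      have hw : F.conn k ∈ F.S := wF.conn_mem k hk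
      have htc : (tensor F G).conn (2*k) = 2*(F.conn k) := tensor_conn_even F G hk
      have hB2 : (tensor (comp F H) (comp G K)).conn (2*(2*k))
          = 2*((comp F H).conn (2*k)) := tensor_conn_even _ _ (mtFH1 hk)
      by_cases hr0 : (F.r (F.conn k)).isSome
      · have hcond : ((tensor F G).r ((tensor F G).conn (2*k))).isSome := by
          rw [htc, tensor_r_even F G hw]
          simpa using hr0
        have hA := comp_conn_even_some (tensor F G) (tensor H K) (mtFG1 hk) hcond
        rw [htc] at hA
        have hB := comp_conn_even_some F H hk hr0
        rw [hA, phi00 (F.conn k), phi00 k, hB2, hB]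
      · have hrn : F.r (F.conn k) = none := Option.not_isSome_iff_eq_none.mp hr0
        have hwout : F.conn k ∈ F.outputs := List.mem_filter.mpr ⟨hw, by simp [hrn]⟩
        have hi : F.outputs.idxOf (F.conn k) < H.inputs.length :=
          hFH ▸ List.idxOf_lt_length_iff.mpr hwout
        have hcond : (tensor F G).r ((tensor F G).conn (2*k)) = none := by
          rw [htc, tensor_r_even F G hw, hrn]
          rfl
        have hio : (tensor F G).outputs.idxOf ((tensor F G).conn (2*k))
            = F.outputs.idxOf (F.conn k) := by
          rw [htc, tensor_outputs,
            List.idxOf_append_of_mem (List.mem_map.mpr ⟨F.conn k, hwout, rfl⟩),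
            indexOf_map' injD0 (F.conn k)]
        have hlenA : (tensor F G).outputs.idxOf ((tensor F G).conn (2*k))
            < (tensor H K).inputs.length := by
          rw [hio, tensor_inputs, List.length_append, List.length_map, List.length_map]
          omega
        have hA := comp_conn_even_none (tensor F G) (tensor H K) (mtFG1 hk) hcond hlenA
        rw [hio] at hA
        have hgd : (tensor H K).inputs.getD (F.outputs.idxOf (F.conn k)) 0
            = 2 * (H.inputs.getD (F.outputs.idxOf (F.conn k)) 0) := by
          rw [tensor_inputs, List.getD_append _ _ _ _ (by rw [List.length_map]; exact hi),
            getD_map' (d' := 0) hi]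
        have hu : H.inputs.getD (F.outputs.idxOf (F.conn k)) 0 ∈ H.T := by
          have h1 : H.inputs.getD (F.outputs.idxOf (F.conn k)) 0 ∈ H.inputs := by
            rw [List.getD_eq_getElem _ _ hi]
            exact List.getElem_mem hi
          exact (List.mem_filter.mp h1).1
        rw [hgd, tensor_conn_even H K hu] at hA
        have hB := comp_conn_even_none F H hk hrn hi
        rw [hA, phi10 (H.conn (H.inputs.getD (F.outputs.idxOf (F.conn k)) 0)), phi00 k,
          hB2, hB]
    · -- G block
      have hw : G.conn k ∈ G.S := wG.conn_mem k hk
      have htc : (tensor F G).conn (2*k+1) = 2*(G.conn k)+1 := tensor_conn_odd F G k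
      have hB2 : (tensor (comp F H) (comp G K)).conn (2*(2*k)+1)
          = 2*((comp G K).conn (2*k)) + 1 := tensor_conn_odd _ _ (2*k)
      by_cases hr0 : (G.r (G.conn k)).isSome
      · have hcond : ((tensor F G).r ((tensor F G).conn (2*k+1))).isSome := by
          rw [htc, tensor_r_odd]
          simpa using hr0
        have hA := comp_conn_even_some (tensor F G) (tensor H K) (mtFG2 hk) hcond
        rw [htc] at hA
        have hB := comp_conn_even_some G K hk hr0
        rw [hA, phi01 (G.conn k), phi01 k, hB2, hB]
      · have hrn : G.r (G.conn k) = none := Option.not_isSome_iff_eq_none.mp hr0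
        have hwout : G.conn k ∈ G.outputs := List.mem_filter.mpr ⟨hw, by simp [hrn]⟩
        have hj : G.outputs.idxOf (G.conn k) < K.inputs.length :=
          hGK ▸ List.idxOf_lt_length_iff.mpr hwout
        have hcond : (tensor F G).r ((tensor F G).conn (2*k+1)) = none := by
          rw [htc, tensor_r_odd, hrn]
          rfl
        have hio : (tensor F G).outputs.idxOf ((tensor F G).conn (2*k+1))
            = F.outputs.length + G.outputs.idxOf (G.conn k) := by
          rw [htc, tensor_outputs, List.idxOf_append_of_notMem not_memD0,
            List.length_map,
            indexOf_map' (l := G.outputs) (f := fun x => 2*x+1) injD1 (G.conn k)]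
        have hlenA : (tensor F G).outputs.idxOf ((tensor F G).conn (2*k+1))
            < (tensor H K).inputs.length := by
          rw [hio, tensor_inputs, List.length_append, List.length_map, List.length_map]
          omega
        have hA := comp_conn_even_none (tensor F G) (tensor H K) (mtFG2 hk) hcond hlenA
        rw [hio] at hA
        have hgd : (tensor H K).inputs.getD
              (F.outputs.length + G.outputs.idxOf (G.conn k)) 0
            = 2 * (K.inputs.getD (G.outputs.idxOf (G.conn k)) 0) + 1 := by
          rw [tensor_inputs,
            List.getD_append_right _ _ _ _ (by rw [List.length_map]; omega),
            List.length_map, ← hFH, Nat.add_sub_cancel_left,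
            getD_map' (d' := 0) hj]
        have hu : K.inputs.getD (G.outputs.idxOf (G.conn k)) 0 ∈ K.T := by
          have h1 : K.inputs.getD (G.outputs.idxOf (G.conn k)) 0 ∈ K.inputs := by
            rw [List.getD_eq_getElem _ _ hj]
            exact List.getElem_mem hj
          exact (List.mem_filter.mp h1).1
        rw [hgd, tensor_conn_odd] at hA
        have hB := comp_conn_even_none G K hk hrn hj
        rw [hA, phi11 (K.conn (K.inputs.getD (G.outputs.idxOf (G.conn k)) 0)), phi01 k,
          hB2, hB]
    · -- H block
      have hA := comp_conn_odd (tensor F G) (tensor H K) (2*k)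
      rw [tensor_conn_even H K hk] at hA
      have hB2 : (tensor (comp F H) (comp G K)).conn (2*(2*k+1))
          = 2*((comp F H).conn (2*k+1)) := tensor_conn_even _ _ (mtFH2 hk hs)
      have hB := comp_conn_odd F H k
      rw [hA, phi10 (H.conn k), phi10 k, hB2, hB]
    · -- K block
      have hA := comp_conn_odd (tensor F G) (tensor H K) (2*k+1)
      rw [tensor_conn_odd] at hA
      have hB2 : (tensor (comp F H) (comp G K)).conn (2*(2*k+1)+1)
          = 2*((comp G K).conn (2*k+1)) + 1 := tensor_conn_odd _ _ (2*k+1)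
      have hB := comp_conn_odd G K k
      rw [hA, phi11 (K.conn k), phi11 k, hB2, hB]
  have hsurjT : ∀ w ∈ (tensor (comp F H) (comp G K)).T,
      ∃ v ∈ (comp (tensor F G) (tensor H K)).T, phi v = w := by
    intro w hw
    rcases (memBT w).mp hw with ⟨k, hk, rfl⟩ | ⟨k, hk, rfl⟩ | ⟨k, hk, rfl⟩ | ⟨k, hk, rfl⟩
    · exact ⟨2*(2*k), (memAT _).mpr (Or.inl ⟨k, hk, rfl⟩), phi00 k⟩
    · exact ⟨2*(2*k)+1, (memAT _).mpr (Or.inr (Or.inr (Or.inl ⟨k, hk, rfl⟩))), phi10 k⟩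
    · exact ⟨2*(2*k+1), (memAT _).mpr (Or.inr (Or.inl ⟨k, hk, rfl⟩)), phi01 k⟩
    · exact ⟨2*(2*k+1)+1, (memAT _).mpr (Or.inr (Or.inr (Or.inr ⟨k, hk, rfl⟩))), phi11 k⟩
  have hsurjS : ∀ w ∈ (tensor (comp F H) (comp G K)).S,
      ∃ v ∈ (comp (tensor F G) (tensor H K)).S, phi v = w := by
    intro w hw
    rcases (memBS w).mp hw with ⟨k, hk, rfl⟩ | ⟨k, hk, rfl⟩ | ⟨k, hk, rfl⟩ | ⟨k, hk, rfl⟩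
    · exact ⟨2*(2*k), (memAS _).mpr (Or.inl ⟨k, hk, rfl⟩), phi00 k⟩
    · exact ⟨2*(2*k)+1, (memAS _).mpr (Or.inr (Or.inr (Or.inl ⟨k, hk, rfl⟩))), phi10 k⟩
    · exact ⟨2*(2*k+1), (memAS _).mpr (Or.inr (Or.inl ⟨k, hk, rfl⟩)), phi01 k⟩
    · exact ⟨2*(2*k+1)+1, (memAS _).mpr (Or.inr (Or.inr (Or.inr ⟨k, hk, rfl⟩))), phi11 k⟩
  have hsurjE : ∀ e' ∈ (tensor (comp F H) (comp G K)).E,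
      ∃ e ∈ (comp (tensor F G) (tensor H K)).E, phi e = e' := by
    intro w hw
    rcases (memBE w).mp hw with ⟨a, ha, rfl⟩ | ⟨a, ha, rfl⟩ | ⟨a, ha, rfl⟩ | ⟨a, ha, rfl⟩
    · exact ⟨2*(2*a), (memAE _).mpr (Or.inl ⟨a, ha, rfl⟩), phi00 a⟩
    · exact ⟨2*(2*a)+1, (memAE _).mpr (Or.inr (Or.inr (Or.inl ⟨a, ha, rfl⟩))), phi10 a⟩
    · exact ⟨2*(2*a+1), (memAE _).mpr (Or.inr (Or.inl ⟨a, ha, rfl⟩)), phi01 a⟩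
    · exact ⟨2*(2*a+1)+1, (memAE _).mpr (Or.inr (Or.inr (Or.inr ⟨a, ha, rfl⟩))), phi11 a⟩
  exact ⟨{
    hT := phi, hS := phi, hE := phi
    memT := hmemT, memS := hmemS, memE := hmemE
    ell_comm := hell, r_comm := hr, conn_comm := hconn, lab_comm := hlab
    src_ord := hsrc, tgt_ord := htgt
    injT := fun v₁ _ v₂ _ h => phi_inj v₁ v₂ h
    surjT := hsurjT
    injS := fun v₁ _ v₂ _ h => phi_inj v₁ v₂ h
    surjS := hsurjS
    injE := fun e₁ _ e₂ _ h => phi_inj e₁ e₂ h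
    surjE := hsurjE
    inputs_ord := hinputs, outputs_ord := houtputs }⟩

end LinHyp

end Paper

namespace Paper

open LinHyp

/-- **Bifunctoriality.** For any `m, n ∈ ℕ`,
`id_m ⊗ id_n ≅ id_{m+n}`, and for any linear hypergraphs `F : m → n`,
`G : r → s`, `H : n → p` and `K : s → t` over `Σ`,
`(F ⊗ G) ⨾ (H ⊗ K) ≅ (F ⨾ H) ⊗ (G ⨾ K)`. -/
theorem bifunctoriality (Sg : Sig) :
    (∀ m n : ℕ, Isom (tensor (idH Sg m) (idH Sg n)) (idH Sg (m + n))) ∧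
    (∀ (m n p r s t : ℕ) (F G H K : LinHyp Sg), F.WF → G.WF → H.WF → K.WF →
      F.HasType m n → G.HasType r s → H.HasType n p → K.HasType s t →
      Isom (comp (tensor F G) (tensor H K)) (tensor (comp F H) (comp G K))) := by
  constructor
  · exact fun m n => tensor_id_iso Sg m n
  · intro m n p r s t F G H K wF wG wH wK tF tG tH tK
    exact comp_tensor_iso F G H K wF wG (by rw [tF.2, tH.1]) (by rw [tG.2, tK.1])

end Paper
end
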